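/- arXiv:1808.03901 — 6 statements merged into one kernel-verified Lean document; each statement's English description precedes it below -/
import Mathlib

section
/- For any fixed q ∈ (0,1), the function f(x) = x·q^{x-1}/(1 - q^x) is strictly monotonically decreasing on the interval [1, ∞). -/
open Finset Filter

/-- The q-integer [m:q] = (1-q^m)/(1-q). -/
noncomputable def qint (q : ℝ) (m : ℕ) : ℝ := (1 - q ^ m) / (1 - q)

/-- Tail of the multiple q-zeta value: sum over m₁ > ⋯ > m_d > n. -/
noncomputable def qZeta {d : ℕ} (q : ℝ) (k : Fin d → ℕ) (n : ℕ) : ℝ :=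
  ∑' m : {m : Fin d → ℕ // StrictAnti m ∧ ∀ i, n < m i},
    ∏ i, q ^ (m.1 i * (k i - 1)) / (qint q (m.1 i)) ^ (k i)

/-- The modified multiple q-zeta value ζ[k₁,…,k_d; r : q). -/
noncomputable def qZetaR {d : ℕ} (q : ℝ) (k : Fin d → ℕ) (r : ℕ) : ℝ :=
  ∑' m : {m : Fin (d + 1) → ℕ // StrictAnti m ∧ ∀ i, 0 < m i},
    (∏ i : Fin d, q ^ (m.1 i.castSucc * (k i - 1)) / (qint q (m.1 i.castSucc)) ^ (k i))
      / (m.1 (Fin.last d) : ℝ) ^ r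

/-- Multiple zeta value. -/
noncomputable def mzv {d : ℕ} (k : Fin d → ℕ) : ℝ :=
  ∑' m : {m : Fin d → ℕ // StrictAnti m ∧ ∀ i, 0 < m i},
    ∏ i, (1 : ℝ) / (m.1 i : ℝ) ^ (k i)

/-- Akhilesh's double tail of a multiple zeta value. -/
noncomputable def dtail {d : ℕ} (hd : 0 < d) (k : Fin d → ℕ) (p n : ℕ) : ℝ :=
  ∑' m : {m : Fin d → ℕ // StrictAnti m ∧ ∀ i, n < m i},
    ((Nat.choose (m.1 ⟨0, hd⟩ + p) p : ℝ))⁻¹ * ∏ i, (1 : ℝ) / (m.1 i : ℝ) ^ (k i)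


theorem stmt2 (q : ℝ) (hq : q ∈ Set.Ioo (0:ℝ) 1) :
    StrictAntiOn (fun x : ℝ => x * q ^ (x - 1) / (1 - q ^ x)) (Set.Ici 1) := by
  obtain ⟨hq0, hq1⟩ := hq
  set L := -Real.log q with hL
  have hLpos : 0 < L := by
    simp only [hL, neg_pos]
    exact Real.log_neg hq0 hq1
  have key : ∀ x : ℝ, 1 ≤ x → x * q ^ (x - 1) / (1 - q ^ x)
      = x / (q * (Real.exp (L * x) - 1)) := by
    intro x hx
    have hx0 : (0:ℝ) < x := lt_of_lt_of_le one_pos hx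
    have hqx : q ^ x = Real.exp (-(L * x)) := by
      rw [Real.rpow_def_of_pos hq0, hL]; ring_nf
    have h1 : q ^ (x - 1) = q ^ x / q := by
      rw [Real.rpow_sub hq0, Real.rpow_one]
    have hexp1 : 1 < Real.exp (L * x) := Real.one_lt_exp_iff.2 (by positivity)
    have hexp0 : (0:ℝ) < Real.exp (L * x) := Real.exp_pos _
    rw [h1, hqx, Real.exp_neg]
    have hA : (0:ℝ) < 1 - (Real.exp (L * x))⁻¹ := by
      have : (Real.exp (L * x))⁻¹ < 1 := by
        rw [inv_lt_one_iff₀]; right; exact hexp1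
      linarith
    have hB : (0:ℝ) < q * (Real.exp (L * x) - 1) := by
      apply mul_pos hq0; linarith
    rw [div_eq_div_iff hA.ne' hB.ne']
    field_simp
  intro a ha b hb hab
  simp only [Set.mem_Ici] at ha hb
  have ha0 : (0:ℝ) < a := lt_of_lt_of_le one_pos ha
  have hb0 : (0:ℝ) < b := ha0.trans hab
  simp only [key a ha, key b hb]
  have hea : (0:ℝ) < Real.exp (L * a) - 1 := by
    have : 1 < Real.exp (L * a) := Real.one_lt_exp_iff.2 (by positivity)
    linarith
  have heb : (0:ℝ) < Real.exp (L * b) - 1 := by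
    have : 1 < Real.exp (L * b) := Real.one_lt_exp_iff.2 (by positivity)
    linarith
  rw [div_lt_div_iff₀ (by positivity) (by positivity)]
  have hst : L * a < L * b := by nlinarith
  have hs : (0:ℝ) < L * a := by positivity
  have ht : (0:ℝ) < L * b := by positivity
  have θpos : 0 < (L * a) / (L * b) := div_pos hs ht
  have θlt : (L * a) / (L * b) < 1 := (div_lt_one ht).2 hst
  have conv := strictConvexOn_exp.2 (Set.mem_univ (0:ℝ)) (Set.mem_univ (L * b))
    ht.ne (show (0:ℝ) < 1 - (L * a) / (L * b) by linarith) θpos (by ring)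
  have hsmul : (1 - (L * a) / (L * b)) • (0:ℝ) + ((L * a) / (L * b)) • (L * b) = L * a := by
    rw [smul_eq_mul, smul_eq_mul, mul_zero, zero_add, div_mul_cancel₀ _ ht.ne']
  rw [hsmul, smul_eq_mul, smul_eq_mul, Real.exp_zero] at conv
  have h2 : Real.exp (L * a) - 1 < ((L * a) / (L * b)) * (Real.exp (L * b) - 1) := by
    nlinarith
  have hdiv : (L * a) / (L * b) = a / b := by
    rw [mul_div_mul_left _ _ hLpos.ne']
  rw [hdiv] at h2
  have hkey : b * (Real.exp (L * a) - 1) < a * (Real.exp (L * b) - 1) := by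
    have := mul_lt_mul_of_pos_left h2 hb0
    calc b * (Real.exp (L * a) - 1) < b * (a / b * (Real.exp (L * b) - 1)) := this
      _ = a * (Real.exp (L * b) - 1) := by field_simp
  nlinarith [hkey, hq0]
end

section
/- Let d, m₁, …, m_d, k be positive integers with m₁ ≥ m₂ ≥ ⋯ ≥ m_d and k ≥ d+1. Then the function f(q) = q^{m₁(k-1)} / ([m₁:q]^k · [m₂:q] ⋯ [m_d:q]) is strictly monotonically increasing on the interval (0,1). -/
open Finset Filter

-- AUX START
lemma xinv_anti {u v : ℝ} (hu : 0 < u) (huv : u ≤ v) (hv : v ≤ 1) : v + v⁻¹ ≤ u + u⁻¹ := by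
  have hv0 : 0 < v := lt_of_lt_of_le hu huv
  have key : u + u⁻¹ - (v + v⁻¹) = (v - u) * (1 - u * v) / (u * v) := by
    field_simp; ring
  have h1 : u * v ≤ 1 := by nlinarith
  have h2 : (0:ℝ) ≤ (v - u) * (1 - u * v) / (u * v) :=
    div_nonneg (mul_nonneg (by linarith) (by linarith)) (by positivity)
  linarith

lemma aux1n {p q : ℝ} (hp : 0 < p) (hpq : p ≤ q) (hq : q ≤ 1) (n : ℕ) :
    q ^ (n:ℤ) + q ^ (-(n:ℤ)) ≤ p ^ (n:ℤ) + p ^ (-(n:ℤ)) := by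
  have hq0 : 0 < q := lt_of_lt_of_le hp hpq
  rw [zpow_neg, zpow_neg, zpow_natCast, zpow_natCast]
  exact xinv_anti (pow_pos hp n) (pow_le_pow_left₀ hp.le hpq n) (pow_le_one₀ hq0.le hq)

lemma aux1 {p q : ℝ} (hp : 0 < p) (hpq : p ≤ q) (hq : q ≤ 1) (e : ℤ) :
    q ^ e + q ^ (-e) ≤ p ^ e + p ^ (-e) := by
  rcases le_or_gt 0 e with he | he
  · obtain ⟨n, rfl⟩ := Int.eq_ofNat_of_zero_le he
    exact aux1n hp hpq hq n
  · obtain ⟨n, rfl⟩ : ∃ n : ℕ, e = -(n:ℤ) := ⟨(-e).toNat, by omega⟩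
    rw [neg_neg, add_comm, add_comm (p ^ (-(n:ℤ)))]
    exact aux1n hp hpq hq n

lemma aux2 {p q : ℝ} (hp : 0 < p) (hpq : p ≤ q) (e : ℤ) (he : e ≤ 0) :
    q ^ e ≤ p ^ e := by
  have hq0 : 0 < q := lt_of_lt_of_le hp hpq
  obtain ⟨n, rfl⟩ : ∃ n : ℕ, e = -(n:ℤ) := ⟨(-e).toNat, by omega⟩
  rw [zpow_neg, zpow_neg, zpow_natCast, zpow_natCast]
  exact inv_anti₀ (pow_pos hp n) (pow_le_pow_left₀ hp.le hpq n)

lemma expand (a b : ℕ) {x : ℝ} (hx : x ≠ 0) :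
    (∑ j ∈ Icc 1 a, x ^ (-(j:ℤ))) * (∑ t ∈ range b, x ^ (t:ℤ)) =
      ∑ pr ∈ Icc 1 a ×ˢ range b, x ^ ((pr.2:ℤ) - (pr.1:ℤ)) := by
  rw [Finset.sum_mul_sum, Finset.sum_product]
  refine Finset.sum_congr rfl fun j hj => Finset.sum_congr rfl fun t ht => ?_
  rw [← zpow_add₀ hx]
  ring_nf

lemma sumT_anti {a b : ℕ} (ha : 1 ≤ b) (hab : b ≤ a) {p q : ℝ}
    (hp : 0 < p) (hpq : p < q) (hq : q < 1) :
    ∑ pr ∈ Icc 1 a ×ˢ range b, q ^ ((pr.2:ℤ) - (pr.1:ℤ)) <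
      ∑ pr ∈ Icc 1 a ×ˢ range b, p ^ ((pr.2:ℤ) - (pr.1:ℤ)) := by
  have hq0 : 0 < q := lt_of_lt_of_le hp hpq.le
  set T : Finset (ℕ × ℕ) := Icc 1 a ×ˢ range b with hT
  set P : Finset (ℕ × ℕ) := T.filter fun pr => pr.1 < pr.2 with hP
  set Q : Finset (ℕ × ℕ) := P.image Prod.swap with hQ
  have hQmem : ∀ pr ∈ Q, pr.2 < pr.1 ∧ 1 ≤ pr.2 := by
    intro pr hpr
    simp only [hQ, mem_image] at hpr
    obtain ⟨s, hs, rfl⟩ := hpr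
    simp only [hP, mem_filter, hT, mem_product, mem_Icc, mem_range] at hs
    exact ⟨hs.2, hs.1.1.1⟩
  have hQT : Q ⊆ T := by
    intro pr hpr
    simp only [hQ, mem_image] at hpr
    obtain ⟨⟨j, t⟩, hs, rfl⟩ := hpr
    simp only [hP, mem_filter, hT, mem_product, mem_Icc, mem_range, Prod.swap_prod_mk] at hs ⊢
    refine ⟨⟨?_, ?_⟩, ?_⟩ <;> omega
  have hPQ : Disjoint P Q := by
    rw [Finset.disjoint_left]
    intro pr hpr hpr'
    have h1 := (hQmem pr hpr').1
    simp only [hP, mem_filter] at hpr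
    omega
  have hPT : P ⊆ T := filter_subset _ _
  have hsplit : ∀ x : ℝ, x ≠ 0 → ∑ pr ∈ T, x ^ ((pr.2:ℤ) - (pr.1:ℤ)) =
      (∑ pr ∈ P, (x ^ ((pr.2:ℤ) - (pr.1:ℤ)) + x ^ (-((pr.2:ℤ) - (pr.1:ℤ))))) +
        ∑ pr ∈ T \ (P ∪ Q), x ^ ((pr.2:ℤ) - (pr.1:ℤ)) := by
    intro x hx
    have hsub : P ∪ Q ⊆ T := union_subset hPT hQT
    rw [← Finset.sum_sdiff hsub, Finset.sum_union hPQ]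
    have hswap : ∑ pr ∈ Q, x ^ ((pr.2:ℤ) - (pr.1:ℤ)) =
        ∑ pr ∈ P, x ^ (-((pr.2:ℤ) - (pr.1:ℤ))) := by
      rw [hQ, Finset.sum_image (fun s _ t _ h => Prod.swap_injective h)]
      refine Finset.sum_congr rfl fun s _ => ?_
      simp [neg_sub]
    rw [hswap, Finset.sum_add_distrib]
    ring
  rw [hsplit q (ne_of_gt hq0), hsplit p (ne_of_gt hp)]
  have h1 : (∑ pr ∈ P, (q ^ ((pr.2:ℤ) - (pr.1:ℤ)) + q ^ (-((pr.2:ℤ) - (pr.1:ℤ))))) ≤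
      ∑ pr ∈ P, (p ^ ((pr.2:ℤ) - (pr.1:ℤ)) + p ^ (-((pr.2:ℤ) - (pr.1:ℤ)))) :=
    Finset.sum_le_sum fun pr _ => aux1 hp hpq.le hq.le _
  have h2 : ∑ pr ∈ T \ (P ∪ Q), q ^ ((pr.2:ℤ) - (pr.1:ℤ)) <
      ∑ pr ∈ T \ (P ∪ Q), p ^ ((pr.2:ℤ) - (pr.1:ℤ)) := by
    have hmem10 : ((1,0) : ℕ × ℕ) ∈ T \ (P ∪ Q) := by
      simp only [Finset.mem_sdiff, hT, mem_product, mem_Icc, mem_range, mem_union, hP, mem_filter]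
      refine ⟨⟨⟨le_refl 1, by omega⟩, by omega⟩, ?_⟩
      rintro (⟨_, h⟩ | h)
      · omega
      · have := (hQmem _ h).2; simp at this
    refine Finset.sum_lt_sum (fun pr hpr => ?_) ⟨(1,0), hmem10, ?_⟩
    · have : (pr.2:ℤ) - (pr.1:ℤ) ≤ 0 := by
        simp only [Finset.mem_sdiff, hT, mem_product, mem_Icc, mem_range, mem_union, hP,
          mem_filter] at hpr
        omega
      exact aux2 hp hpq.le _ this
    · norm_num
      exact inv_strictAnti₀ hp hpq
  exact add_lt_add_of_le_of_lt h1 h2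

lemma qint_eq {x : ℝ} (hx : x ≠ 1) (n : ℕ) : qint x n = ∑ t ∈ range n, x ^ (t:ℤ) := by
  simp only [zpow_natCast]
  rw [geom_sum_eq hx, qint]
  rw [div_eq_div_iff (by intro h; apply hx; linarith) (by intro h; apply hx; linarith)]
  ring

lemma qint_pos {x : ℝ} (hx : x ∈ Set.Ioo (0:ℝ) 1) {n : ℕ} (hn : 0 < n) : 0 < qint x n := by
  obtain ⟨h0, h1⟩ := hx
  have : x ^ n < 1 := pow_lt_one₀ h0.le h1 (by omega)
  exact div_pos (by linarith) (by linarith)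

lemma qS_eq {x : ℝ} (hx : x ≠ 0) (a : ℕ) :
    ∑ j ∈ Icc 1 a, x ^ (-(j:ℤ)) = x ^ (-(a:ℤ)) * ∑ t ∈ range a, x ^ (t:ℤ) := by
  rw [Finset.mul_sum]
  refine Finset.sum_nbij' (fun j => a - j) (fun t => a - t) ?_ ?_ ?_ ?_ ?_
  · intro j hj; simp only [mem_Icc] at hj; simp only [mem_range]; omega
  · intro t ht; simp only [mem_range] at ht; simp only [mem_Icc]; omega
  · intro j hj; simp only [mem_Icc] at hj; omega
  · intro t ht; simp only [mem_range] at ht; omega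
  · intro j hj
    simp only [mem_Icc] at hj
    rw [← zpow_add₀ hx]
    congr 1
    push_cast [Nat.cast_sub (by omega : j ≤ a)]
    ring

lemma qS_pos {x : ℝ} (hx : 0 < x) {a : ℕ} (ha : 0 < a) :
    0 < ∑ j ∈ Icc 1 a, x ^ (-(j:ℤ)) :=
  Finset.sum_pos (fun j _ => zpow_pos hx _) ⟨1, by simp [mem_Icc]; omega⟩

lemma qS_anti {p q : ℝ} (hp : 0 < p) (hpq : p ≤ q) (a : ℕ) :
    ∑ j ∈ Icc 1 a, q ^ (-(j:ℤ)) ≤ ∑ j ∈ Icc 1 a, p ^ (-(j:ℤ)) :=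
  Finset.sum_le_sum fun j _ => by
    rw [zpow_neg, zpow_neg, zpow_natCast, zpow_natCast]
    exact inv_anti₀ (pow_pos hp j) (pow_le_pow_left₀ hp.le hpq j)
-- AUX END


theorem stmt3 (d : ℕ) (hd : 0 < d) (m : Fin d → ℕ) (hm : ∀ i, 0 < m i)
    (hmono : Antitone m) (k : ℕ) (hk : d + 1 ≤ k) :
    StrictMonoOn
      (fun q : ℝ => q ^ (m ⟨0, hd⟩ * (k - 1)) /
        ((qint q (m ⟨0, hd⟩)) ^ (k - 1) * ∏ i, qint q (m i)))
      (Set.Ioo 0 1) := by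
  intro p hp q hq hpq
  obtain ⟨hp0, hp1⟩ := hp
  obtain ⟨hq0, hq1⟩ := hq
  set a := m ⟨0, hd⟩ with ha
  have hma : ∀ i, m i ≤ a := fun i => hmono (Fin.le_def.mpr (Nat.zero_le _))
  have ha1 : 0 < a := hm _
  haveI : Nonempty (Fin d) := Fin.pos_iff_nonempty.mp hd
  -- identity: f x = (F x)⁻¹
  have key : ∀ x : ℝ, 0 < x → x < 1 →
      x ^ (a * (k - 1)) / (qint x a ^ (k - 1) * ∏ i, qint x (m i)) =
      ((∑ j ∈ Icc 1 a, x ^ (-(j:ℤ))) ^ (k - 1) * ∏ i, qint x (m i))⁻¹ := by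
    intro x hx0 hx1
    have hxne : x ≠ 0 := ne_of_gt hx0
    have hqa : qint x a = ∑ t ∈ range a, x ^ (t:ℤ) := qint_eq (ne_of_lt hx1) a
    rw [qS_eq hxne, mul_pow, ← hqa]
    have h1 : (x ^ (-(a:ℤ))) ^ (k-1) = (x ^ (a*(k-1)))⁻¹ := by
      rw [← zpow_natCast (x ^ (-(a:ℤ))) (k-1), ← zpow_mul, ← zpow_natCast x (a*(k-1)),
        ← zpow_neg]
      congr 1
      push_cast
      ring
    rw [h1, mul_assoc, mul_inv, inv_inv, ← div_eq_mul_inv]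
  -- strict antitonicity of F
  have hrw : ∀ x : ℝ, 0 < x → x < 1 →
      (∑ j ∈ Icc 1 a, x ^ (-(j:ℤ))) ^ (k - 1) * ∏ i, qint x (m i) =
      (∑ j ∈ Icc 1 a, x ^ (-(j:ℤ))) ^ (k - 1 - d) *
        ∏ i, (∑ pr ∈ Icc 1 a ×ˢ range (m i), x ^ ((pr.2:ℤ) - (pr.1:ℤ))) := by
    intro x hx0 hx1
    have hxne : x ≠ 0 := ne_of_gt hx0
    calc (∑ j ∈ Icc 1 a, x ^ (-(j:ℤ))) ^ (k - 1) * ∏ i, qint x (m i)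
        = (∑ j ∈ Icc 1 a, x ^ (-(j:ℤ))) ^ (k - 1 - d) *
          ((∑ j ∈ Icc 1 a, x ^ (-(j:ℤ))) ^ d * ∏ i, qint x (m i)) := by
          rw [← mul_assoc, ← pow_add]
          congr 2
          omega
      _ = (∑ j ∈ Icc 1 a, x ^ (-(j:ℤ))) ^ (k - 1 - d) *
          ∏ i : Fin d, ((∑ j ∈ Icc 1 a, x ^ (-(j:ℤ))) * qint x (m i)) := by
          rw [Finset.prod_mul_distrib, Finset.prod_const, card_univ, Fintype.card_fin]
      _ = (∑ j ∈ Icc 1 a, x ^ (-(j:ℤ))) ^ (k - 1 - d) *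
          ∏ i, (∑ pr ∈ Icc 1 a ×ˢ range (m i), x ^ ((pr.2:ℤ) - (pr.1:ℤ))) := by
          congr 1
          refine Finset.prod_congr rfl fun i _ => ?_
          rw [qint_eq (ne_of_lt hx1) (m i), expand _ _ hxne]
  have hTpos : ∀ (x : ℝ), 0 < x → ∀ i : Fin d,
      0 < ∑ pr ∈ Icc 1 a ×ˢ range (m i), x ^ ((pr.2:ℤ) - (pr.1:ℤ)) := by
    intro x hx0 i
    refine Finset.sum_pos (fun pr _ => zpow_pos hx0 _) ⟨(1,0), ?_⟩
    simp only [mem_product, mem_Icc, mem_range]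
    exact ⟨⟨le_refl 1, ha1⟩, hm i⟩
  have hFanti : (∑ j ∈ Icc 1 a, q ^ (-(j:ℤ))) ^ (k - 1) * ∏ i, qint q (m i) <
      (∑ j ∈ Icc 1 a, p ^ (-(j:ℤ))) ^ (k - 1) * ∏ i, qint p (m i) := by
    rw [hrw p hp0 hp1, hrw q hq0 hq1]
    have hS : (∑ j ∈ Icc 1 a, q ^ (-(j:ℤ))) ^ (k-1-d) ≤
        (∑ j ∈ Icc 1 a, p ^ (-(j:ℤ))) ^ (k-1-d) :=
      pow_le_pow_left₀ (qS_pos hq0 ha1).le (qS_anti hp0 hpq.le a) _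
    have hProd : (∏ i, (∑ pr ∈ Icc 1 a ×ˢ range (m i), q ^ ((pr.2:ℤ) - (pr.1:ℤ)))) <
        ∏ i, (∑ pr ∈ Icc 1 a ×ˢ range (m i), p ^ ((pr.2:ℤ) - (pr.1:ℤ))) :=
      Finset.prod_lt_prod_of_nonempty (fun i _ => hTpos q hq0 i)
        (fun i _ => sumT_anti (hm i) (hma i) hp0 hpq hq1) univ_nonempty
    exact mul_lt_mul' hS hProd (Finset.prod_pos fun i _ => hTpos q hq0 i).le
      (pow_pos (qS_pos hp0 ha1) _)
  have hFq : 0 < (∑ j ∈ Icc 1 a, q ^ (-(j:ℤ))) ^ (k - 1) * ∏ i, qint q (m i) :=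
    mul_pos (pow_pos (qS_pos hq0 ha1) _)
      (Finset.prod_pos fun i _ => qint_pos ⟨hq0, hq1⟩ (hm i))
  simp only
  rw [key p hp0 hp1, key q hq0 hq1]
  exact inv_strictAnti₀ hFq hFanti
end

section
/- For positive integers m and k with k ≥ 2, the function q ↦ q^{m(k-1)} / [m:q]^k is monotonically increasing on the interval (0,1). -/
open Finset Filter

lemma key_sum (m k : ℕ) (hm : 0 < m) (hk : 2 ≤ k) (x : ℝ) (hx0 : 0 < x) (hx1 : x < 1) :
    0 ≤ ∑ i ∈ range m, (((m * (k - 1) : ℕ) : ℝ) - k * i) * x ^ i := by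
  set N := m * (k - 1) with hN
  set a := N / k with ha
  have hk0 : 0 < k := by omega
  have step : ∀ i ∈ range m, (((N : ℕ) : ℝ) - k * i) * x ^ a ≤ (((N : ℕ) : ℝ) - k * i) * x ^ i := by
    intro i _
    rcases le_or_gt i a with h | h
    · have hc : (0 : ℝ) ≤ ((N : ℕ) : ℝ) - k * i := by
        have : i * k ≤ N := (Nat.le_div_iff_mul_le hk0).1 h
        have : ((i * k : ℕ) : ℝ) ≤ ((N : ℕ) : ℝ) := by exact_mod_cast this
        push_cast at this; nlinarith
      have hp : x ^ a ≤ x ^ i := pow_le_pow_of_le_one hx0.le hx1.le h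
      nlinarith
    · have hc : ((N : ℕ) : ℝ) - k * i ≤ 0 := by
        have : N < i * k := (Nat.div_lt_iff_lt_mul hk0).1 h
        have : ((N : ℕ) : ℝ) < ((i * k : ℕ) : ℝ) := by exact_mod_cast this
        push_cast at this; nlinarith
      have hp : x ^ i ≤ x ^ a := pow_le_pow_of_le_one hx0.le hx1.le h.le
      nlinarith
  have h1 : ∑ i ∈ range m, (((N : ℕ) : ℝ) - k * i) * x ^ a
      ≤ ∑ i ∈ range m, (((N : ℕ) : ℝ) - k * i) * x ^ i := Finset.sum_le_sum step
  refine le_trans ?_ h1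
  rw [← Finset.sum_mul]
  apply mul_nonneg _ (pow_nonneg hx0.le a)
  have hsum : ∑ i ∈ range m, (((N : ℕ) : ℝ) - k * i)
      = m * N - k * (m * (m - 1) / 2) := by
    rw [Finset.sum_sub_distrib, Finset.sum_const, ← Finset.mul_sum]
    have h2 : ((∑ i ∈ range m, i : ℕ) : ℝ) * 2 = m * (m - 1) := by
      have := Finset.sum_range_id_mul_two m
      have := congrArg (fun n : ℕ => (n : ℝ)) this
      push_cast [Nat.cast_sub hm] at this ⊢
      · linarith
    simp only [Finset.card_range, nsmul_eq_mul]
    push_cast at h2 ⊢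
    have h4 : ∑ i ∈ range m, (i:ℝ) = m * ((m:ℝ) - 1) / 2 := by linarith
    rw [h4]
  rw [hsum]
  have hNr : ((N : ℕ) : ℝ) = m * (k - 1) := by
    rw [hN]; push_cast [Nat.cast_sub (by omega : 1 ≤ k)]; ring
  have hm1 : (1 : ℝ) ≤ m := by exact_mod_cast hm
  have hk2 : (2 : ℝ) ≤ k := by exact_mod_cast hk
  have h3 : (0:ℝ) ≤ (m:ℝ) * ((m:ℝ)*((k:ℝ)-2) + k) :=
    mul_nonneg (by linarith) (by nlinarith)
  rw [hNr]
  nlinarith [h3]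


lemma qint_eq_geom (m : ℕ) (z : ℝ) (hz : z ≠ 1) :
    qint z m = ∑ i ∈ range m, z ^ i := by
  rw [geom_sum_eq hz, qint]
  rw [div_eq_div_iff (by intro h; apply hz; linarith) (by intro h; apply hz; linarith)]
  ring

lemma main_mono (m k : ℕ) (hm : 0 < m) (hk : 2 ≤ k) :
    MonotoneOn (fun q : ℝ => q ^ (m * (k - 1)) / (∑ i ∈ range m, q ^ i) ^ k)
      (Set.Ioo 0 1) := by
  have hN1 : 1 ≤ m * (k - 1) := Nat.one_le_iff_ne_zero.2 (by
    have : 0 < m * (k - 1) := Nat.mul_pos hm (by omega)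
    omega)
  obtain ⟨N', hN'⟩ : ∃ N', m * (k - 1) = N' + 1 := ⟨m * (k - 1) - 1, by omega⟩
  obtain ⟨k', hk'⟩ : ∃ k', k = k' + 1 := ⟨k - 1, by omega⟩
  have hder : ∀ x ∈ Set.Ioo (0:ℝ) 1,
      HasDerivAt (fun q : ℝ => q ^ (m * (k - 1)) / (∑ i ∈ range m, q ^ i) ^ k)
        ((((m * (k - 1) : ℕ) : ℝ) * x ^ (m * (k - 1) - 1) * (∑ i ∈ range m, x ^ i) ^ k
          - x ^ (m * (k - 1)) * ((k : ℝ) * (∑ i ∈ range m, x ^ i) ^ (k - 1)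
              * (∑ i ∈ range m, (i : ℝ) * x ^ (i - 1))))
          / ((∑ i ∈ range m, x ^ i) ^ k) ^ 2) x := by
    intro x hx
    have hS : 0 < ∑ i ∈ range m, x ^ i :=
      Finset.sum_pos (fun i _ => pow_pos hx.1 i) (Finset.nonempty_range_iff.2 hm.ne')
    have h1 : HasDerivAt (fun q : ℝ => q ^ (m * (k - 1)))
        (((m * (k - 1) : ℕ) : ℝ) * x ^ (m * (k - 1) - 1)) x := hasDerivAt_pow _ x
    have h2 : HasDerivAt (fun q : ℝ => ∑ i ∈ range m, q ^ i)
        (∑ i ∈ range m, (i : ℝ) * x ^ (i - 1)) x :=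
      HasDerivAt.fun_sum fun i _ => hasDerivAt_pow i x
    have h3 := h2.pow k
    exact h1.div h3 (pow_ne_zero k hS.ne')
  apply monotoneOn_of_deriv_nonneg (convex_Ioo 0 1)
  · exact fun x hx => (hder x hx).continuousAt.continuousWithinAt
  · rw [interior_Ioo]
    exact fun x hx => (hder x hx).differentiableAt.differentiableWithinAt
  · intro x hx
    rw [interior_Ioo] at hx
    rw [(hder x hx).deriv]
    have hS : 0 < ∑ i ∈ range m, x ^ i :=
      Finset.sum_pos (fun i _ => pow_pos hx.1 i) (Finset.nonempty_range_iff.2 hm.ne')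
    apply div_nonneg _ (by positivity)
    have hxS' : x * ∑ i ∈ range m, (i : ℝ) * x ^ (i - 1)
        = ∑ i ∈ range m, (i : ℝ) * x ^ i := by
      rw [Finset.mul_sum]
      refine Finset.sum_congr rfl fun i _ => ?_
      rcases i with _ | j
      · simp
      · simp only [Nat.add_sub_cancel, pow_succ]
        push_cast
        ring
    have hkey := key_sum m k hm hk x hx.1 hx.2
    have expand : ∑ i ∈ range m, (((m * (k - 1) : ℕ) : ℝ) - k * i) * x ^ i
        = ((m * (k - 1) : ℕ) : ℝ) * (∑ i ∈ range m, x ^ i)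
          - (k : ℝ) * (x * ∑ i ∈ range m, (i : ℝ) * x ^ (i - 1)) := by
      rw [hxS', Finset.mul_sum, Finset.mul_sum, ← Finset.sum_sub_distrib]
      exact Finset.sum_congr rfl fun i _ => by ring
    have harith : (((m * (k - 1) : ℕ) : ℝ) * x ^ (m * (k - 1) - 1) * (∑ i ∈ range m, x ^ i) ^ k
          - x ^ (m * (k - 1)) * ((k : ℝ) * (∑ i ∈ range m, x ^ i) ^ (k - 1)
              * (∑ i ∈ range m, (i : ℝ) * x ^ (i - 1))))
        = x ^ (m * (k - 1) - 1) * (∑ i ∈ range m, x ^ i) ^ (k - 1)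
          * (((m * (k - 1) : ℕ) : ℝ) * (∑ i ∈ range m, x ^ i)
            - (k : ℝ) * (x * ∑ i ∈ range m, (i : ℝ) * x ^ (i - 1))) := by
      rw [hN', hk']
      simp only [Nat.add_sub_cancel]
      ring
    rw [harith, ← expand]
    exact mul_nonneg (mul_nonneg (pow_nonneg hx.1.le _) (pow_nonneg hS.le _)) hkey

theorem stmt4 (m k : ℕ) (hm : 0 < m) (hk : 2 ≤ k) :
    MonotoneOn (fun q : ℝ => q ^ (m * (k - 1)) / (qint q m) ^ k) (Set.Ioo 0 1) := by
  intro x hx y hy hxy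
  show x ^ (m * (k - 1)) / (qint x m) ^ k ≤ y ^ (m * (k - 1)) / (qint y m) ^ k
  rw [qint_eq_geom m x (ne_of_lt hx.2), qint_eq_geom m y (ne_of_lt hy.2)]
  exact main_mono m k hm hk hx hy hxy
end

section
/- Let (k₁,…,k_d) be an admissible multi-index and r a positive integer. Then for every q ∈ (0,1), ζ[k₁,…,k_d; r : q) < ζ[k₁,…,k_d, 1 : q]. -/
open Finset Filter

lemma qint_eq_sum {q : ℝ} (hq : q ≠ 1) (m : ℕ) : qint q m = ∑ i ∈ Finset.range m, q ^ i := by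
  rw [geom_sum_eq hq, qint, ← neg_sub (q ^ m) 1, ← neg_sub q 1, neg_div_neg_eq]

lemma one_le_qint {q : ℝ} (hq : q ∈ Set.Ioo (0:ℝ) 1) {m : ℕ} (hm : 1 ≤ m) : 1 ≤ qint q m := by
  rw [qint_eq_sum hq.2.ne m]
  calc (1:ℝ) = q ^ 0 := by simp
  _ ≤ ∑ i ∈ Finset.range m, q ^ i := by
      apply Finset.single_le_sum (f := fun i => q ^ i)
      · intro i _; exact pow_nonneg hq.1.le i
      · simpa using (show 0 < m from hm)

lemma qint_pos_s7 {q : ℝ} (hq : q ∈ Set.Ioo (0:ℝ) 1) {m : ℕ} (hm : 1 ≤ m) : 0 < qint q m :=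
  lt_of_lt_of_le one_pos (one_le_qint hq hm)

lemma qint_le_nat {q : ℝ} (hq : q ∈ Set.Ioo (0:ℝ) 1) (m : ℕ) : qint q m ≤ m := by
  rw [qint_eq_sum hq.2.ne m]
  calc ∑ i ∈ Finset.range m, q ^ i ≤ ∑ _i ∈ Finset.range m, (1:ℝ) :=
        Finset.sum_le_sum (fun i _ => pow_le_one₀ hq.1.le hq.2.le)
  _ = m := by simp

lemma summable_pi_pow {c : ℝ} (hc0 : 0 ≤ c) (hc1 : c < 1) (n : ℕ) :
    Summable (fun m : Fin n → ℕ => ∏ i, c ^ m i) := by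
  induction n with
  | zero => exact Summable.of_finite
  | succ n ih =>
    have h := (summable_geometric_of_lt_one hc0 hc1).mul_of_nonneg ih
      (fun x => by positivity) (fun x => Finset.prod_nonneg fun i _ => by positivity)
    have h2 := h.comp_injective (Fin.consEquiv (fun _ => ℕ)).symm.injective
    refine h2.congr fun m => ?_
    rw [Fin.prod_univ_succ]
    rfl

theorem stmt7 (d : ℕ) (hd : 0 < d) (k : Fin d → ℕ) (hk1 : 2 ≤ k ⟨0, hd⟩)
    (hk : ∀ i, 1 ≤ k i) (r : ℕ) (hr : 0 < r) (q : ℝ) (hq : q ∈ Set.Ioo (0:ℝ) 1) :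
    qZetaR q k r < qZeta q (Fin.snoc k 1) 0 := by
  obtain ⟨hq0, hq1⟩ := hq
  set k' : Fin (d+1) → ℕ := Fin.snoc k 1 with hk'
  set S := {m : Fin (d+1) → ℕ // StrictAnti m ∧ ∀ i, 0 < m i}
  set g : S → ℝ := fun m => ∏ i, q ^ (m.1 i * (k' i - 1)) / (qint q (m.1 i)) ^ (k' i) with hg
  set f : S → ℝ := fun m =>
    (∏ i : Fin d, q ^ (m.1 i.castSucc * (k i - 1)) / (qint q (m.1 i.castSucc)) ^ (k i))
      / (m.1 (Fin.last d) : ℝ) ^ r with hf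
  have hone : ∀ (m : S) (i : Fin (d+1)), 1 ≤ m.1 i := fun m i => m.2.2 i
  have hfac : ∀ (m : S) (i : Fin (d+1)),
      0 ≤ q ^ (m.1 i * (k' i - 1)) / (qint q (m.1 i)) ^ (k' i) := by
    intro m i
    exact div_nonneg (pow_nonneg hq0.le _)
      (pow_nonneg (qint_pos_s7 ⟨hq0, hq1⟩ (hone m i)).le _)
  set P : S → ℝ := fun m =>
    ∏ i : Fin d, q ^ (m.1 i.castSucc * (k i - 1)) / (qint q (m.1 i.castSucc)) ^ (k i) with hP
  have hPpos : ∀ m : S, 0 < P m := by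
    intro m
    apply Finset.prod_pos
    intro i _
    exact div_pos (pow_pos hq0 _) (pow_pos (qint_pos_s7 ⟨hq0, hq1⟩ (hone m i.castSucc)) _)
  have hk'last : k' (Fin.last d) = 1 := by simp [hk']
  have hgP : ∀ m : S, g m = P m / qint q (m.1 (Fin.last d)) := by
    intro m
    show (∏ i, q ^ (m.1 i * (k' i - 1)) / (qint q (m.1 i)) ^ (k' i))
      = P m / qint q (m.1 (Fin.last d))
    rw [Fin.prod_univ_castSucc
      (f := fun i => q ^ (m.1 i * (k' i - 1)) / (qint q (m.1 i)) ^ (k' i))]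
    simp [hk', Fin.snoc_castSucc, hk'last, mul_one_div, hP, div_eq_mul_inv]
  have hqintpos : ∀ m : S, 0 < qint q (m.1 (Fin.last d)) :=
    fun m => qint_pos_s7 ⟨hq0, hq1⟩ (hone m _)
  have hle : f ≤ g := by
    intro m
    rw [hgP m]
    show P m / (m.1 (Fin.last d) : ℝ) ^ r ≤ P m / qint q (m.1 (Fin.last d))
    apply div_le_div_of_nonneg_left (hPpos m).le (hqintpos m)
    calc qint q (m.1 (Fin.last d)) ≤ (m.1 (Fin.last d) : ℝ) := qint_le_nat ⟨hq0, hq1⟩ _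
    _ ≤ (m.1 (Fin.last d) : ℝ) ^ r := le_self_pow₀ (by exact_mod_cast hone m _) hr.ne'
  set Q : ℝ := q ^ (((d:ℝ) + 1)⁻¹) with hQ
  have hQ0 : 0 < Q := Real.rpow_pos_of_pos hq0 _
  have hQ1 : Q < 1 := Real.rpow_lt_one hq0.le hq1 (by positivity)
  have hQpow : Q ^ (d + 1) = q := by
    rw [hQ, ← Real.rpow_natCast (q ^ (((d:ℝ) + 1)⁻¹)) (d+1), ← Real.rpow_mul hq0.le]
    rw [show (((d:ℝ) + 1)⁻¹ * ((d:ℕ)+1:ℕ)) = 1 by push_cast; field_simp]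
    exact Real.rpow_one q
  have hk'0 : 2 ≤ k' 0 := by
    have h00 : (0 : Fin (d+1)) = Fin.castSucc ⟨0, hd⟩ := by ext; simp
    rw [h00, hk', Fin.snoc_castSucc]; exact hk1
  have hgle : ∀ m : S, g m ≤ ∏ i, Q ^ m.1 i := by
    intro m
    have step1 : g m ≤ q ^ (m.1 0) := by
      show (∏ i, q ^ (m.1 i * (k' i - 1)) / (qint q (m.1 i)) ^ (k' i)) ≤ q ^ (m.1 0)
      rw [Fin.prod_univ_succ
        (f := fun i => q ^ (m.1 i * (k' i - 1)) / (qint q (m.1 i)) ^ (k' i))]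
      have h1 : q ^ (m.1 0 * (k' 0 - 1)) / (qint q (m.1 0)) ^ (k' 0) ≤ q ^ (m.1 0) := by
        calc q ^ (m.1 0 * (k' 0 - 1)) / (qint q (m.1 0)) ^ (k' 0)
            ≤ q ^ (m.1 0 * (k' 0 - 1)) :=
              div_le_self (by positivity) (one_le_pow₀ (one_le_qint ⟨hq0, hq1⟩ (hone m 0)))
        _ ≤ q ^ (m.1 0) := by
              apply pow_le_pow_of_le_one hq0.le hq1.le
              exact Nat.le_mul_of_pos_right _ (by omega)
      have h2 : (∏ i : Fin d, q ^ (m.1 i.succ * (k' i.succ - 1)) /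
          (qint q (m.1 i.succ)) ^ (k' i.succ)) ≤ 1 := by
        apply Finset.prod_le_one
        · intro i _; exact hfac m i.succ
        · intro i _
          apply div_le_one_of_le₀
          · exact le_trans (pow_le_one₀ hq0.le hq1.le)
              (one_le_pow₀ (one_le_qint ⟨hq0, hq1⟩ (hone m _)))
          · exact pow_nonneg (qint_pos_s7 ⟨hq0, hq1⟩ (hone m _)).le _
      calc _ ≤ q ^ (m.1 0) * 1 := by
              apply mul_le_mul h1 h2
                (Finset.prod_nonneg fun i _ => hfac m i.succ) (by positivity)
      _ = q ^ (m.1 0) := mul_one _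
    have hsum : ∑ i, m.1 i ≤ (d + 1) * m.1 0 := by
      calc ∑ i, m.1 i ≤ (Finset.univ : Finset (Fin (d+1))).card • m.1 0 :=
            Finset.sum_le_card_nsmul _ _ _ (fun i _ => m.2.1.antitone (Fin.zero_le i))
      _ = (d + 1) * m.1 0 := by simp [mul_comm]
    calc g m ≤ q ^ (m.1 0) := step1
    _ = Q ^ ((d + 1) * m.1 0) := by rw [pow_mul, hQpow]
    _ ≤ Q ^ (∑ i, m.1 i) := pow_le_pow_of_le_one hQ0.le hQ1.le hsum
    _ = ∏ i, Q ^ m.1 i := (Finset.prod_pow_eq_pow_sum _ _ _).symm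
  have hmaj : Summable (fun m : S => ∏ i, Q ^ m.1 i) :=
    (summable_pi_pow hQ0.le hQ1 (d+1)).subtype {m | StrictAnti m ∧ ∀ i, 0 < m i}
  have hgnonneg : ∀ m : S, 0 ≤ g m :=
    fun m => Finset.prod_nonneg fun i _ => hfac m i
  have hgsum : Summable g := Summable.of_nonneg_of_le hgnonneg hgle hmaj
  have hfnonneg : ∀ m : S, 0 ≤ f m := by
    intro m
    show 0 ≤ P m / (m.1 (Fin.last d) : ℝ) ^ r
    exact div_nonneg (hPpos m).le (by positivity)
  have hfsum : Summable f := Summable.of_nonneg_of_le hfnonneg (fun m => hle m) hgsum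
  have hm0 : StrictAnti (fun i : Fin (d+1) => d + 2 - i.val) ∧
      ∀ i : Fin (d+1), 0 < d + 2 - i.val := by
    constructor
    · intro i j hij
      have h1 : i.val < j.val := hij
      have h2 := j.isLt
      show d + 2 - j.val < d + 2 - i.val
      omega
    · intro i; have := i.isLt; omega
  set m₀ : S := ⟨fun i => d + 2 - i.val, hm0⟩ with hm₀
  have hlast2 : m₀.1 (Fin.last d) = 2 := by
    show d + 2 - (Fin.last d).val = 2
    simp only [Fin.val_last]; omega
  have hstrict : f m₀ < g m₀ := by
    rw [hgP m₀]
    show P m₀ / (m₀.1 (Fin.last d) : ℝ) ^ r < P m₀ / qint q (m₀.1 (Fin.last d))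
    have h2 : qint q 2 = 1 + q := by
      rw [qint_eq_sum hq1.ne 2]
      simp [Finset.sum_range_succ]
    rw [hlast2, h2]
    push_cast
    apply div_lt_div_of_pos_left (hPpos m₀) (by linarith)
    calc 1 + q < 2 := by linarith
    _ ≤ (2:ℝ) ^ r := le_self_pow₀ one_le_two hr.ne'
  exact Summable.tsum_lt_tsum hle hstrict hfsum hgsum
end

section
/- For every admissible multi-index k = (k₁,…,k_d), every positive integer r, and every q ∈ (0,1), ζ[k; r : q) < ζ[2 : q]. -/
open Finset Filter

open scoped ENNReal NNReal

namespace St10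

noncomputable def Wt (q : ℝ) (c m : ℕ) : ℝ := q ^ (m * (c - 1)) / (qint q m) ^ c
noncomputable def w (q : ℝ) (m : ℕ) : ℝ := q ^ m / (qint q m) ^ 2
noncomputable def g (q : ℝ) (m : ℕ) : ℝ := q ^ (m + 1) / qint q m



abbrev J (n : ℕ) : Type := {x : ℕ // n < x}
abbrev Idx (j n : ℕ) : Type := {m : Fin j → ℕ // StrictAnti m ∧ ∀ i, n < m i}

noncomputable def eT (q : ℝ) (n : ℕ) : ℝ≥0∞ := ∑' x : J n, ENNReal.ofReal (w q x.1)

noncomputable def eZ (q : ℝ) (k' : ℕ → ℕ) : ℕ → ℕ → ℝ≥0∞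
  | 0, _ => 1
  | (j+1), n => ∑' x : J n, ENNReal.ofReal (Wt q (k' j) x.1) * eZ q k' j x.1

instance (n : ℕ) : Unique (Idx 0 n) where
  default := ⟨fun i => i.elim0, fun a => a.elim0, fun i => i.elim0⟩
  uniq := fun m => Subtype.ext (funext fun i => i.elim0)

def peelEquiv (j n : ℕ) : Idx (j+1) n ≃ Σ x : J n, Idx j x.1 where
  toFun m := ⟨⟨m.1 (Fin.last j), m.2.2 _⟩, ⟨Fin.init m.1,
    fun a b hab => m.2.1 (Fin.castSucc_lt_castSucc_iff.2 hab),
    fun i => m.2.1 (Fin.castSucc_lt_last i)⟩⟩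
  invFun p := ⟨Fin.snoc p.2.1 p.1.1, by
    intro a b hab
    induction b using Fin.lastCases with
    | last =>
      rw [Fin.snoc_last]
      obtain ⟨a', rfl⟩ := Fin.exists_castSucc_eq.2 (ne_of_lt hab)
      rw [Fin.snoc_castSucc]
      exact p.2.2.2 a'
    | cast b' =>
      have hb' : a ≠ Fin.last j := ne_of_lt (lt_trans hab (Fin.castSucc_lt_last b'))
      obtain ⟨a', rfl⟩ := Fin.exists_castSucc_eq.2 hb'
      rw [Fin.snoc_castSucc, Fin.snoc_castSucc]
      exact p.2.2.1 (Fin.castSucc_lt_castSucc_iff.1 hab), by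
    intro i
    induction i using Fin.lastCases with
    | last => rw [Fin.snoc_last]; exact p.1.2
    | cast i => rw [Fin.snoc_castSucc]; exact lt_trans p.1.2 (p.2.2.2 i)⟩
  left_inv m := Subtype.ext (Fin.snoc_init_self m.1)
  right_inv p := by
    obtain ⟨⟨x, hx⟩, ⟨f, hf1, hf2⟩⟩ := p
    have h1 : (Fin.snoc f x : Fin (j+1) → ℕ) (Fin.last j) = x := Fin.snoc_last (α := fun _ : Fin (j+1) => ℕ) x f
    refine Sigma.ext (Subtype.ext h1) ?_
    refine (Subtype.heq_iff_coe_eq ?_).2 (Fin.init_snoc (α := fun _ : Fin (j+1) => ℕ) x f)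
    intro v
    show StrictAnti v ∧ (∀ i, (Fin.snoc f x : Fin (j+1) → ℕ) (Fin.last j) < v i) ↔ _
    rw [h1]

lemma tsum_peel {j n : ℕ} (f : (Fin (j+1) → ℕ) → ℝ≥0∞) :
    ∑' m : Idx (j+1) n, f m.1
      = ∑' x : J n, ∑' m' : Idx j x.1, f (Fin.snoc m'.1 x.1) := by
  calc ∑' m : Idx (j+1) n, f m.1
      = ∑' p : (Σ x : J n, Idx j x.1), f (((peelEquiv j n).symm p).1) :=
        (Equiv.tsum_eq (peelEquiv j n).symm (fun m : Idx (j+1) n => f m.1)).symm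
  _ = ∑' x : J n, ∑' m' : Idx j x.1, f (((peelEquiv j n).symm ⟨x, m'⟩).1) :=
        ENNReal.tsum_sigma' _
  _ = _ := rfl

lemma G_eq (q : ℝ) (k' : ℕ → ℕ) (j : ℕ) : ∀ n : ℕ,
    ∑' m : Idx j n, ∏ i : Fin j, ENNReal.ofReal (Wt q (k' i.1) (m.1 i)) = eZ q k' j n := by
  induction j with
  | zero =>
    intro n
    show _ = (1 : ℝ≥0∞)
    calc ∑' m : Idx 0 n, ∏ i : Fin 0, ENNReal.ofReal (Wt q (k' i.1) (m.1 i))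
        = ∑' _m : Idx 0 n, (1:ℝ≥0∞) := tsum_congr (fun m => by simp)
    _ = 1 := tsum_eq_single (default : Idx 0 n)
        (fun b hb => absurd (Subsingleton.elim b default) hb)
  | succ j ih =>
    intro n
    rw [show eZ q k' (j+1) n = ∑' x : J n, ENNReal.ofReal (Wt q (k' j) x.1) * eZ q k' j x.1 from rfl]
    rw [tsum_peel (fun v : Fin (j+1) → ℕ => ∏ i : Fin (j+1), ENNReal.ofReal (Wt q (k' i.1) (v i)))]
    congr 1
    funext x
    have hterm : ∀ m' : Idx j x.1,
        (∏ i : Fin (j+1), ENNReal.ofReal (Wt q (k' i.1) ((Fin.snoc m'.1 x.1 : Fin (j+1) → ℕ) i)))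
        = ENNReal.ofReal (Wt q (k' j) x.1)
            * ∏ i : Fin j, ENNReal.ofReal (Wt q (k' i.1) (m'.1 i)) := by
      intro m'
      rw [Fin.prod_univ_castSucc]
      rw [mul_comm]
      congr 1
      · rw [Fin.snoc_last, Fin.val_last]
      · apply Finset.prod_congr rfl
        intro i _
        rw [Fin.snoc_castSucc, Fin.coe_castSucc]
    rw [tsum_congr hterm, ENNReal.tsum_mul_left, ih x.1]

variable {q : ℝ} (hq0 : 0 < q) (hq1 : q < 1)


lemma qint_eq_sum (hq1 : q < 1) (m : ℕ) : qint q m = ∑ i ∈ Finset.range m, q ^ i := by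
  rw [geom_sum_eq (by linarith : q ≠ 1)]
  rw [qint, ← neg_sub (q ^ m) 1, ← neg_sub q 1, neg_div_neg_eq]

include hq0 hq1

lemma qint_pos {m : ℕ} (hm : 1 ≤ m) : 0 < qint q m := by
  apply div_pos _ (by linarith)
  have : q ^ m < 1 := pow_lt_one₀ (le_of_lt hq0) hq1 (by omega)
  linarith

lemma one_le_qint {m : ℕ} (hm : 1 ≤ m) : 1 ≤ qint q m := by
  rw [qint_eq_sum hq1]
  calc (1:ℝ) = ∑ i ∈ Finset.range 1, q ^ i := by simp
  _ ≤ _ := Finset.sum_le_sum_of_subset_of_nonneg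
      (Finset.range_subset_range.2 hm) (fun i _ _ => by positivity)

lemma qint_nonneg (m : ℕ) : 0 ≤ qint q m := by
  apply div_nonneg _ (by linarith)
  have : q ^ m ≤ 1 := pow_le_one₀ (le_of_lt hq0) (le_of_lt hq1)
  linarith

lemma qint_le_nat (m : ℕ) : qint q m ≤ m := by
  rw [qint_eq_sum hq1]
  calc ∑ i ∈ Finset.range m, q ^ i ≤ ∑ i ∈ Finset.range m, 1 :=
    Finset.sum_le_sum (fun i _ => pow_le_one₀ (le_of_lt hq0) (le_of_lt hq1))
  _ = m := by simp

lemma qint_mono {m : ℕ} : qint q m ≤ qint q (m + 1) := by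
  rw [qint_eq_sum hq1, qint_eq_sum hq1]
  apply Finset.sum_le_sum_of_subset_of_nonneg (Finset.range_subset_range.2 (by omega))
    (fun i _ _ => by positivity)

lemma qint_succ (m : ℕ) : qint q (m + 1) = 1 + q * qint q m := by
  have h : (1:ℝ) - q ≠ 0 := by linarith
  rw [qint, qint, pow_succ]
  field_simp
  ring

omit hq0 in
lemma qint_one : qint q 1 = 1 := by
  rw [qint, pow_one, div_self (by linarith)]




-- assume results from a.lean
include hq0 hq1

lemma Wt_nonneg (c m : ℕ) : 0 ≤ Wt q c m := by
  apply div_nonneg (by positivity)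
  exact pow_nonneg (qint_nonneg hq0 hq1 m) c

lemma w_nonneg (m : ℕ) : 0 ≤ w q m := by
  apply div_nonneg (by positivity); positivity

lemma Wt_le_inv {c m : ℕ} (hc : 1 ≤ c) (hm : 1 ≤ m) : Wt q c m ≤ 1 / qint q m := by
  have h1 : (0:ℝ) < qint q m := qint_pos hq0 hq1 hm
  apply div_le_div₀ (by norm_num) _ h1 (le_self_pow₀ (one_le_qint hq0 hq1 hm) (by omega))
  exact pow_le_one₀ (le_of_lt hq0) (le_of_lt hq1)

lemma Wt_le_w {c m : ℕ} (hc : 2 ≤ c) (hm : 1 ≤ m) : Wt q c m ≤ w q m := by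
  have h1 : (0:ℝ) < qint q m := qint_pos hq0 hq1 hm
  apply div_le_div₀ (by positivity) _ (by positivity)
    (pow_le_pow_right₀ (one_le_qint hq0 hq1 hm) hc)
  calc q ^ (m * (c-1)) ≤ q ^ (m * 1) := by
        apply pow_le_pow_of_le_one (le_of_lt hq0) (le_of_lt hq1)
        exact Nat.mul_le_mul_left m (by omega)
  _ = q ^ m := by rw [Nat.mul_one]

lemma w_le_geom (m : ℕ) (hm : 1 ≤ m) : w q m ≤ q ^ m := by
  rw [w]
  calc q ^ m / qint q m ^ 2 ≤ q ^ m / 1 ^ 2 := by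
        apply div_le_div_of_nonneg_left (by positivity) (by norm_num)
        have := one_le_qint hq0 hq1 hm
        nlinarith [this]
  _ = q ^ m := by norm_num

lemma summable_w : Summable (w q) := by
  apply Summable.of_nonneg_of_le (w_nonneg hq0 hq1) (fun m => ?_)
    (summable_geometric_of_lt_one (le_of_lt hq0) hq1)
  match m with
  | 0 => simp [w, qint]
  | (m+1) => exact w_le_geom hq0 hq1 _ (by omega)

noncomputable def T (q : ℝ) (n : ℕ) : ℝ := ∑' x : {x : ℕ // n < x}, w q x.1

lemma summable_w_sub (n : ℕ) : Summable (fun x : {x : ℕ // n < x} => w q x.1) :=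
  (summable_w hq0 hq1).subtype _

lemma T_nonneg (n : ℕ) : 0 ≤ T q n :=
  tsum_nonneg (fun x => w_nonneg hq0 hq1 _)

lemma g_nonneg (m : ℕ) : 0 ≤ g q m := by
  apply div_nonneg (by positivity) (qint_nonneg hq0 hq1 m)

lemma w_le_g_sub {m : ℕ} (hm : 1 ≤ m) : w q (m+1) ≤ g q m - g q (m+1) := by
  have ha : (0:ℝ) < qint q m := qint_pos hq0 hq1 hm
  have hb : (0:ℝ) < qint q (m+1) := qint_pos hq0 hq1 (by omega)
  have hab : qint q m ≤ qint q (m+1) := qint_mono hq0 hq1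
  have key : g q m - g q (m+1) = q^(m+1) / (qint q m * qint q (m+1)) := by
    rw [g, g]
    rw [div_sub_div _ _ (ne_of_gt ha) (ne_of_gt hb)]
    congr 1
    rw [qint_succ hq0 hq1 m]
    ring
  rw [key, w]
  apply div_le_div_of_nonneg_left (by positivity) (by positivity)
  calc qint q m * qint q (m+1) ≤ qint q (m+1) * qint q (m+1) := by nlinarith
  _ = qint q (m+1) ^ 2 := (sq (qint q (m+1))).symm

lemma g_le_geom (m : ℕ) : g q m ≤ q ^ (m + 1) := by
  rw [g]
  match m with
  | 0 => simp [qint]; positivity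
  | (m+1) =>
    calc q^(m+1+1) / qint q (m+1) ≤ q^(m+1+1) / 1 := by
          apply div_le_div_of_nonneg_left (by positivity) (by norm_num)
          exact one_le_qint hq0 hq1 (by omega)
    _ = q ^ (m+1+1) := by norm_num

lemma g_tendsto : Tendsto (g q) atTop (nhds 0) := by
  have hgeo : Tendsto (fun m : ℕ => q ^ (m + 1)) atTop (nhds 0) := by
    have h := (tendsto_pow_atTop_nhds_zero_of_lt_one (le_of_lt hq0) hq1)
    simpa [pow_succ] using h.mul_const q
  exact squeeze_zero (g_nonneg hq0 hq1) (g_le_geom hq0 hq1) hgeo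

lemma hasSum_teleg {n : ℕ} (hn : 1 ≤ n) :
    HasSum (fun i : ℕ => g q (n + i) - g q (n + i + 1)) (g q n) := by
  rw [hasSum_iff_tendsto_nat_of_nonneg (fun i => by
    have := w_le_g_sub hq0 hq1 (show 1 ≤ n + i by omega)
    have := w_nonneg hq0 hq1 (n + i + 1)
    linarith)]
  have hps : ∀ N : ℕ, ∑ i ∈ Finset.range N, (g q (n + i) - g q (n + i + 1))
      = g q n - g q (n + N) := by
    intro N
    have := Finset.sum_range_sub' (fun i => g q (n + i)) N
    simpa [add_assoc] using this
  simp only [hps]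
  have : Tendsto (fun N : ℕ => g q (n + N)) atTop (nhds 0) := by
    have := (g_tendsto hq0 hq1).comp (tendsto_add_atTop_nat n)
    simpa [Function.comp_def, Nat.add_comm] using this
  simpa using (tendsto_const_nhds.sub this)

lemma T_le_g {n : ℕ} (hn : 1 ≤ n) : T q n ≤ g q n := by
  let e : ℕ ≃ {x : ℕ // n < x} :=
    ⟨fun i => ⟨n + i + 1, by omega⟩, fun x => x.1 - n - 1,
     fun i => by show n + i + 1 - n - 1 = i; omega,
     fun x => by apply Subtype.ext; show n + (x.1 - n - 1) + 1 = x.1; have := x.2; omega⟩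
  have hle : ∀ i : ℕ, w q (n + i + 1) ≤ g q (n + i) - g q (n + i + 1) := by
    intro i
    have := w_le_g_sub hq0 hq1 (show 1 ≤ n + i by omega)
    simpa [add_assoc] using this
  have hsum : Summable (fun i : ℕ => w q (n + i + 1)) :=
    Summable.of_nonneg_of_le (fun i => w_nonneg hq0 hq1 _) hle
      (hasSum_teleg hq0 hq1 hn).summable
  have hT : T q n = ∑' i : ℕ, w q (n + i + 1) := by
    rw [T]
    exact ((Equiv.tsum_eq e (fun x : {x : ℕ // n < x} => w q x.1)).symm).trans
      (tsum_congr fun i => rfl)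
  rw [hT, ← (hasSum_teleg hq0 hq1 hn).tsum_eq]
  exact Summable.tsum_le_tsum hle hsum (hasSum_teleg hq0 hq1 hn).summable

lemma T_div_le {m : ℕ} (hm : 1 ≤ m) : T q m / qint q m ≤ q * w q m := by
  have h1 : (0:ℝ) < qint q m := qint_pos hq0 hq1 hm
  have h2 : g q m / qint q m = q * w q m := by
    rw [g, w]
    field_simp
    ring
  calc T q m / qint q m ≤ g q m / qint q m :=
        (div_le_div_iff_of_pos_right h1).2 (T_le_g hq0 hq1 hm)
  _ = q * w q m := h2







lemma eT_eq (n : ℕ) : eT q n = ENNReal.ofReal (T q n) := by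
  rw [eT, T, ENNReal.ofReal_tsum_of_nonneg (fun x => w_nonneg hq0 hq1 _)
    (summable_w_sub hq0 hq1 n)]

lemma key_tsum (n : ℕ) :
    ∑' x : J n, ENNReal.ofReal (1 / qint q x.1) * eT q x.1
      ≤ ENNReal.ofReal q * eT q n := by
  calc ∑' x : J n, ENNReal.ofReal (1 / qint q x.1) * eT q x.1
      ≤ ∑' x : J n, ENNReal.ofReal q * ENNReal.ofReal (w q x.1) := by
        apply ENNReal.tsum_le_tsum
        intro x
        have hx1 : 1 ≤ x.1 := by have := x.2; omega
        rw [eT_eq hq0 hq1, ← ENNReal.ofReal_mul (by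
          have := qint_pos hq0 hq1 hx1
          positivity), ← ENNReal.ofReal_mul (le_of_lt hq0)]
        apply ENNReal.ofReal_le_ofReal
        rw [one_div, inv_mul_eq_div]
        exact T_div_le hq0 hq1 hx1
  _ = ENNReal.ofReal q * eT q n := by rw [ENNReal.tsum_mul_left, eT]

lemma eZ_le {k' : ℕ → ℕ} (hk'1 : ∀ j, 1 ≤ k' j) (hk'0 : 2 ≤ k' 0) :
    ∀ j n, eZ q k' (j+1) n ≤ eT q n := by
  intro j
  induction j with
  | zero =>
    intro n
    show (∑' x : J n, ENNReal.ofReal (Wt q (k' 0) x.1) * eZ q k' 0 x.1) ≤ eT q n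
    rw [eT]
    apply ENNReal.tsum_le_tsum
    intro x
    have hx1 : 1 ≤ x.1 := by have := x.2; omega
    show ENNReal.ofReal (Wt q (k' 0) x.1) * 1 ≤ _
    rw [mul_one]
    exact ENNReal.ofReal_le_ofReal (Wt_le_w hq0 hq1 hk'0 hx1)
  | succ j ih =>
    intro n
    show (∑' x : J n, ENNReal.ofReal (Wt q (k' (j+1)) x.1) * eZ q k' (j+1) x.1) ≤ eT q n
    calc (∑' x : J n, ENNReal.ofReal (Wt q (k' (j+1)) x.1) * eZ q k' (j+1) x.1)
        ≤ ∑' x : J n, ENNReal.ofReal (1 / qint q x.1) * eT q x.1 := by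
          apply ENNReal.tsum_le_tsum
          intro x
          have hx1 : 1 ≤ x.1 := by have := x.2; omega
          exact mul_le_mul'
            (ENNReal.ofReal_le_ofReal (Wt_le_inv hq0 hq1 (hk'1 (j+1)) hx1)) (ih x.1)
    _ ≤ ENNReal.ofReal q * eT q n := key_tsum hq0 hq1 n
    _ ≤ 1 * eT q n := mul_le_mul_left (ENNReal.ofReal_le_one.2 (le_of_lt hq1)) _
    _ = eT q n := one_mul _

lemma T_pos : 0 < T q 0 := by
  apply Summable.tsum_pos (summable_w_sub hq0 hq1 0) (fun x => w_nonneg hq0 hq1 _) ⟨1, by omega⟩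
  show 0 < w q 1
  rw [w, qint_one hq1]
  simp only [pow_one, one_pow, div_one]
  exact hq0

omit hq0 hq1 in
lemma qZeta_eq_T : qZeta q (fun _ : Fin 1 => 2) 0 = T q 0 := by
  let e1 : J 0 ≃ {m : Fin 1 → ℕ // StrictAnti m ∧ ∀ i, 0 < m i} :=
    { toFun := fun x => ⟨fun _ => x.1,
        fun a b h => absurd (Subsingleton.elim a b) (ne_of_lt h), fun _ => x.2⟩
      invFun := fun m => ⟨m.1 0, m.2.2 0⟩
      left_inv := fun x => rfl
      right_inv := fun m => Subtype.ext (funext fun i => congrArg m.1 (Subsingleton.elim 0 i)) }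
  rw [qZeta, T]
  rw [← Equiv.tsum_eq e1 (fun m : {m : Fin 1 → ℕ // StrictAnti m ∧ ∀ i, 0 < m i} =>
        ∏ i, q ^ (m.1 i * (2 - 1)) / qint q (m.1 i) ^ 2)]
  apply tsum_congr
  intro x
  rw [Fin.prod_univ_one]
  show q ^ (x.1 * (2 - 1)) / qint q x.1 ^ 2 = w q x.1
  rw [w]
  norm_num

end St10

theorem stmt10 (d : ℕ) (hd : 0 < d) (k : Fin d → ℕ) (hk1 : 2 ≤ k ⟨0, hd⟩)
    (hk : ∀ i, 1 ≤ k i) (r : ℕ) (hr : 0 < r) (q : ℝ) (hq : q ∈ Set.Ioo (0:ℝ) 1) :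
    qZetaR q k r < qZeta q (fun _ : Fin 1 => 2) 0 := by
  obtain ⟨hq0, hq1⟩ := hq
  classical
  set k' : ℕ → ℕ := fun j => if h : j < d then k ⟨j, h⟩ else 1 with hk'def
  have hk'1 : ∀ j, 1 ≤ k' j := by
    intro j
    show 1 ≤ if h : j < d then k ⟨j, h⟩ else 1
    by_cases h : j < d
    · rw [dif_pos h]; exact hk _
    · rw [dif_neg h]
  have hk'0 : 2 ≤ k' 0 := by
    show 2 ≤ if h : 0 < d then k ⟨0, h⟩ else 1
    rw [dif_pos hd]
    exact hk1
  have hki : ∀ i : Fin d, k' i.1 = k i := by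
    intro i
    show (if h : i.1 < d then k ⟨i.1, h⟩ else 1) = k i
    rw [dif_pos i.2]
  -- real term
  set termR : St10.Idx (d+1) 0 → ℝ := fun m =>
    (∏ i : Fin d, q ^ (m.1 i.castSucc * (k i - 1)) / (qint q (m.1 i.castSucc)) ^ (k i))
      / (m.1 (Fin.last d) : ℝ) ^ r with htermRdef
  have hqZetaR : qZetaR q k r = ∑' m : St10.Idx (d+1) 0, termR m := rfl
  have termR_nonneg : ∀ m, 0 ≤ termR m := by
    intro m
    apply div_nonneg _ (by positivity)
    apply Finset.prod_nonneg
    intro i _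
    exact St10.Wt_nonneg hq0 hq1 (k i) (m.1 i.castSucc)
  set F : St10.Idx (d+1) 0 → ℝ≥0∞ := fun m => ENNReal.ofReal (termR m) with hFdef
  have hF : ∀ m : St10.Idx (d+1) 0, F m =
      (∏ i : Fin d, ENNReal.ofReal (St10.Wt q (k' i.1) (m.1 i.castSucc)))
        * ENNReal.ofReal (((m.1 (Fin.last d) : ℝ) ^ r)⁻¹) := by
    intro m
    simp only [hFdef, htermRdef]
    rw [div_eq_mul_inv]
    rw [ENNReal.ofReal_mul (Finset.prod_nonneg
      (fun i _ => show (0:ℝ) ≤ q ^ (m.1 i.castSucc * (k i - 1)) / qint q (m.1 i.castSucc) ^ k i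
        from St10.Wt_nonneg hq0 hq1 (k i) (m.1 i.castSucc)))]
    congr 1
    rw [ENNReal.ofReal_prod_of_nonneg
      (fun (i : Fin d) _ => show (0:ℝ) ≤ q ^ (m.1 i.castSucc * (k i - 1)) / qint q (m.1 i.castSucc) ^ k i
        from St10.Wt_nonneg hq0 hq1 (k i) (m.1 i.castSucc))]
    apply Finset.prod_congr rfl
    intro i _
    rw [hki i]
    rfl
  have step1 : (∑' m : St10.Idx (d+1) 0, F m)
      = ∑' x : St10.J 0, ∑' m' : St10.Idx d x.1,
          (∏ i : Fin d, ENNReal.ofReal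
              (St10.Wt q (k' i.1) ((Fin.snoc m'.1 x.1 : Fin (d+1) → ℕ) i.castSucc)))
            * ENNReal.ofReal ((((Fin.snoc m'.1 x.1 : Fin (d+1) → ℕ) (Fin.last d) : ℝ) ^ r)⁻¹) := by
    rw [tsum_congr hF]
    exact St10.tsum_peel (fun v : Fin (d+1) → ℕ =>
      (∏ i : Fin d, ENNReal.ofReal (St10.Wt q (k' i.1) (v i.castSucc)))
        * ENNReal.ofReal (((v (Fin.last d) : ℝ) ^ r)⁻¹))
  have step2 : ∀ x : St10.J 0, (∑' m' : St10.Idx d x.1,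
          (∏ i : Fin d, ENNReal.ofReal
              (St10.Wt q (k' i.1) ((Fin.snoc m'.1 x.1 : Fin (d+1) → ℕ) i.castSucc)))
            * ENNReal.ofReal ((((Fin.snoc m'.1 x.1 : Fin (d+1) → ℕ) (Fin.last d) : ℝ) ^ r)⁻¹))
      = ENNReal.ofReal (((x.1 : ℝ) ^ r)⁻¹) * St10.eZ q k' d x.1 := by
    intro x
    have hsimp : ∀ m' : St10.Idx d x.1,
        (∏ i : Fin d, ENNReal.ofReal
            (St10.Wt q (k' i.1) ((Fin.snoc m'.1 x.1 : Fin (d+1) → ℕ) i.castSucc)))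
          * ENNReal.ofReal ((((Fin.snoc m'.1 x.1 : Fin (d+1) → ℕ) (Fin.last d) : ℝ) ^ r)⁻¹)
        = (∏ i : Fin d, ENNReal.ofReal (St10.Wt q (k' i.1) (m'.1 i)))
            * ENNReal.ofReal (((x.1 : ℝ) ^ r)⁻¹) := by
      intro m'
      have hlast : (Fin.snoc m'.1 x.1 : Fin (d+1) → ℕ) (Fin.last d) = x.1 :=
        Fin.snoc_last (α := fun _ : Fin (d+1) => ℕ) x.1 m'.1
      congr 1
      · apply Finset.prod_congr rfl
        intro i _
        rw [Fin.snoc_castSucc]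
      · rw [hlast]
    rw [tsum_congr hsimp, ENNReal.tsum_mul_right, St10.G_eq q k' d x.1, mul_comm]
  have hpeel := step1.trans (tsum_congr step2)
  obtain ⟨d', rfl⟩ : ∃ d', d = d' + 1 := ⟨d - 1, by omega⟩
  have hbound : (∑' m : St10.Idx (d'+1+1) 0, F m) ≤ ENNReal.ofReal q * St10.eT q 0 := by
    rw [hpeel]
    refine le_trans (ENNReal.tsum_le_tsum fun x => ?_) (St10.key_tsum hq0 hq1 0)
    have hx1 : 1 ≤ x.1 := x.2
    refine mul_le_mul' (ENNReal.ofReal_le_ofReal ?_)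
      (St10.eZ_le hq0 hq1 hk'1 hk'0 d' x.1)
    rw [one_div]
    apply inv_anti₀ (St10.qint_pos hq0 hq1 hx1)
    calc qint q x.1 ≤ (x.1 : ℝ) := St10.qint_le_nat hq0 hq1 x.1
    _ ≤ (x.1 : ℝ) ^ r := le_self_pow₀ (by exact_mod_cast hx1) (by omega)
  have hrhs_eq : ENNReal.ofReal q * St10.eT q 0 = ENNReal.ofReal (q * St10.T q 0) := by
    rw [St10.eT_eq hq0 hq1, ENNReal.ofReal_mul (le_of_lt hq0)]
  have hne : (∑' m : St10.Idx (d'+1+1) 0, F m) ≠ ⊤ := by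
    apply ne_top_of_le_ne_top _ hbound
    rw [hrhs_eq]
    exact ENNReal.ofReal_ne_top
  have hsumm : Summable termR := by
    have h2 := ENNReal.summable_toReal hne
    apply h2.congr
    intro m
    exact ENNReal.toReal_ofReal (termR_nonneg m)
  have hofReal : ENNReal.ofReal (qZetaR q k r) = ∑' m : St10.Idx (d'+1+1) 0, F m := by
    rw [hqZetaR, ENNReal.ofReal_tsum_of_nonneg termR_nonneg hsumm]
  have hqZle : qZetaR q k r ≤ q * St10.T q 0 := by
    have h3 : ENNReal.ofReal (qZetaR q k r) ≤ ENNReal.ofReal (q * St10.T q 0) := by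
      rw [hofReal, ← hrhs_eq]
      exact hbound
    exact (ENNReal.ofReal_le_ofReal_iff
      (mul_nonneg (le_of_lt hq0) (St10.T_nonneg hq0 hq1 0))).1 h3
  calc qZetaR q k r ≤ q * St10.T q 0 := hqZle
  _ < 1 * St10.T q 0 := mul_lt_mul_of_pos_right hq1 (St10.T_pos hq0 hq1)
  _ = St10.T q 0 := one_mul _
  _ = qZeta q (fun _ : Fin 1 => 2) 0 := (St10.qZeta_eq_T).symm
end

section
/- Every multiple q-zeta value ζ[k : q] (k admissible) and every ζ[k; r : q) (k admissible, r a positive integer), viewed as a function of q on (0,1), is bounded. -/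
open Finset Filter

/-- Core: u^c * (-log u) ≤ (1-u)/c for u ∈ (0,1), c ∈ (0,1]. -/
lemma aux_L1 {u c : ℝ} (hu0 : 0 < u) (hu1 : u < 1) (hc0 : 0 < c) (hc1 : c ≤ 1) :
    u ^ c * (-Real.log u) ≤ (1 - u) / c := by
  have hv0 : 0 < u ^ c := Real.rpow_pos_of_pos hu0 c
  set v := u ^ c with hv
  have hlog : Real.log v = c * Real.log u := Real.log_rpow hu0 c
  have hvinv : Real.log v⁻¹ ≤ v⁻¹ - 1 := Real.log_le_sub_one_of_pos (by positivity)
  rw [Real.log_inv] at hvinv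
  have key : v * (-Real.log v) ≤ 1 - v := by
    have := mul_le_mul_of_nonneg_left hvinv hv0.le
    calc v * (-Real.log v) ≤ v * (v⁻¹ - 1) := this
      _ = 1 - v := by field_simp
  have hvu : u ≤ v := by
    have := Real.rpow_le_rpow_of_exponent_ge hu0 hu1.le hc1
    rwa [Real.rpow_one] at this
  have heq : u ^ c * (-Real.log u) = v * (-Real.log v) / c := by
    rw [hlog]; field_simp; ring
  rw [heq]
  have h2 : v * (-Real.log v) ≤ 1 - u := key.trans (by linarith)
  gcongr

lemma aux_qint_pos {q : ℝ} (hq0 : 0 < q) (hq1 : q < 1) {m : ℕ} (hm : 1 ≤ m) :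
    0 < qint q m := by
  have : q ^ m < 1 := pow_lt_one₀ hq0.le hq1 (by omega)
  have : (0:ℝ) < 1 - q ^ m := by linarith
  exact div_pos this (by linarith)

lemma aux_qint_one_le {q : ℝ} (hq0 : 0 < q) (hq1 : q < 1) {m : ℕ} (hm : 1 ≤ m) :
    1 ≤ qint q m := by
  rw [qint, le_div_iff₀ (by linarith)]
  have : q ^ m ≤ q ^ 1 := pow_le_pow_of_le_one hq0.le hq1.le hm
  simpa using by linarith [this, pow_one q]

lemma aux_one_sub_le {q : ℝ} (hq0 : 0 < q) (hq1 : q < 1) : 1 - q ≤ -Real.log q := by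
  have := Real.log_le_sub_one_of_pos hq0
  linarith

/-- L2: (q^m)^c / [m:q] ≤ 1/(c m). -/
lemma aux_L2 {q : ℝ} (hq0 : 0 < q) (hq1 : q < 1) {m : ℕ} (hm : 1 ≤ m)
    {c : ℝ} (hc0 : 0 < c) (hc1 : c ≤ 1) :
    ((q ^ m : ℝ)) ^ c / qint q m ≤ 1 / (c * m) := by
  have hu0 : (0:ℝ) < q ^ m := by positivity
  have hu1 : (q:ℝ) ^ m < 1 := pow_lt_one₀ hq0.le hq1 (by omega)
  have hm0 : (0:ℝ) < (m:ℝ) := by exact_mod_cast hm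
  have hlogpow : -Real.log (q ^ m) = (m:ℝ) * (-Real.log q) := by
    rw [Real.log_pow]; ring
  have h1q : 0 < 1 - q := by linarith
  have h1u : 0 < 1 - q ^ m := by linarith
  rw [qint, div_div_eq_mul_div, div_le_div_iff₀ h1u (by positivity)]
  -- (q^m)^c * (1-q) * (c*m) ≤ 1 * (1 - q^m)
  have hL1 : (q^m:ℝ)^c * (-Real.log (q^m)) ≤ (1 - q^m)/c := aux_L1 hu0 hu1 hc0 hc1
  have hlq : 1 - q ≤ -Real.log q := aux_one_sub_le hq0 hq1
  have hlq0 : 0 ≤ -Real.log q := le_trans (by linarith) hlq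
  have hcpos : (0:ℝ) < (q^m:ℝ)^c := Real.rpow_pos_of_pos hu0 c
  have step : (q^m:ℝ)^c * ((m:ℝ) * (1 - q)) ≤ (1 - q^m)/c := by
    calc (q^m:ℝ)^c * ((m:ℝ) * (1-q)) ≤ (q^m:ℝ)^c * ((m:ℝ) * (-Real.log q)) := by
          apply mul_le_mul_of_nonneg_left ?_ hcpos.le
          exact mul_le_mul_of_nonneg_left hlq hm0.le
      _ = (q^m:ℝ)^c * (-Real.log (q^m)) := by rw [hlogpow]
      _ ≤ (1 - q^m)/c := hL1
  have := mul_le_mul_of_nonneg_right step hc0.le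
  rw [div_mul_cancel₀ _ hc0.ne'] at this
  nlinarith [this]

/-- L3 : factor-0 bound:  q^m/[m]^2 ≤ 16 (q^m)^{1/2} / m^2. -/
lemma aux_L3 {q : ℝ} (hq0 : 0 < q) (hq1 : q < 1) {m : ℕ} (hm : 1 ≤ m) :
    (q ^ m : ℝ) / (qint q m) ^ 2 ≤ 16 * ((q ^ m : ℝ) ^ ((1:ℝ)/2)) / (m:ℝ) ^ 2 := by
  have hu0 : (0:ℝ) < q ^ m := by positivity
  have hu1 : (q:ℝ) ^ m < 1 := pow_lt_one₀ hq0.le hq1 (by omega)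
  have hm0 : (0:ℝ) < (m:ℝ) := by exact_mod_cast hm
  have h1q : 0 < 1 - q := by linarith
  have h1u : 0 < 1 - q ^ m := by linarith
  set u := (q:ℝ)^m with hu
  have hL1 : u ^ ((1:ℝ)/4) * (-Real.log u) ≤ (1 - u)/((1:ℝ)/4) := aux_L1 hu0 hu1 (by norm_num) (by norm_num)
  have hlq : 1 - q ≤ -Real.log q := aux_one_sub_le hq0 hq1
  have hlogpow : -Real.log u = (m:ℝ) * (-Real.log q) := by
    rw [hu, Real.log_pow]; ring
  have hlq0 : 0 ≤ -Real.log q := le_trans (by linarith) hlq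
  have hq14 : (0:ℝ) < u ^ ((1:ℝ)/4) := Real.rpow_pos_of_pos hu0 _
  have hq12 : (0:ℝ) < u ^ ((1:ℝ)/2) := Real.rpow_pos_of_pos hu0 _
  -- (m:ℝ)*(1-q) ≤ -log u, so m^2 (1-q)^2 ≤ (-log u)^2
  have hstep : (m:ℝ) * (1 - q) ≤ -Real.log u := by
    rw [hlogpow]; exact mul_le_mul_of_nonneg_left hlq hm0.le
  -- key: u * (m*(1-q))^2 ≤ 16 * u^{1/2} * (1-u)^2
  have hrw : u ^ ((1:ℝ)/2) * (u ^ ((1:ℝ)/4))^2 = u := by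
    rw [← Real.rpow_natCast (u ^ ((1:ℝ)/4)) 2, ← Real.rpow_mul hu0.le, ← Real.rpow_add hu0]
    norm_num
  have hlogu0 : 0 ≤ -Real.log u := by
    calc (0:ℝ) ≤ (m:ℝ)*(1-q) := by positivity
      _ ≤ -Real.log u := hstep
  have key : u * ((m:ℝ)*(1-q))^2 ≤ 16 * u ^ ((1:ℝ)/2) * (1-u)^2 := by
    have h2 : ((m:ℝ)*(1-q))^2 ≤ (-Real.log u)^2 := by
      apply sq_le_sq' (by nlinarith [mul_pos hm0 h1q]) hstep
    calc u * ((m:ℝ)*(1-q))^2 ≤ u * (-Real.log u)^2 := by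
          exact mul_le_mul_of_nonneg_left h2 hu0.le
      _ = u ^ ((1:ℝ)/2) * (u ^ ((1:ℝ)/4) * (-Real.log u))^2 := by
          rw [mul_pow, ← mul_assoc, hrw]
      _ ≤ u ^ ((1:ℝ)/2) * ((1-u)/((1:ℝ)/4))^2 := by
          apply mul_le_mul_of_nonneg_left ?_ hq12.le
          apply sq_le_sq' ?_ hL1
          nlinarith [mul_nonneg hq14.le hlogu0, hL1]
      _ = 16 * u ^ ((1:ℝ)/2) * (1-u)^2 := by ring
  -- now unfold qint and conclude
  have hqi : qint q m = (1 - u)/(1 - q) := rfl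
  rw [hqi, div_pow, div_div_eq_mul_div, div_le_div_iff₀ (by positivity) (by positivity)]
  nlinarith [key, sq_nonneg ((m:ℝ)*(1-q)), hu0, hq12]

/-- Core per-term bound for the product of q-factors. -/
lemma aux_prod_bound (e : ℕ) (k : Fin (e+1) → ℕ) (hk1 : 2 ≤ k 0) (hk : ∀ i, 1 ≤ k i)
    {q : ℝ} (hq0 : 0 < q) (hq1 : q < 1)
    (m : Fin (e+1) → ℕ) (hle : ∀ i, m i ≤ m 0) (hpos : ∀ i, 1 ≤ m i) :
    ∏ i, q ^ (m i * (k i - 1)) / (qint q (m i)) ^ (k i)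
      ≤ (16 * (2*(e+1):ℝ)^e) * ((m 0 : ℝ) * ∏ i, (m i : ℝ))⁻¹ := by
  set c : ℝ := ((2*(e+1):ℝ))⁻¹ with hc
  have hc0 : 0 < c := by positivity
  have hc1 : c ≤ 1 := by
    rw [hc]; rw [inv_le_one_iff₀]; right; push_cast; nlinarith [Nat.cast_nonneg (α := ℝ) e]
  have hqipos : ∀ i : Fin (e+1), 0 < qint q (m i) := fun i => aux_qint_pos hq0 hq1 (hpos i)
  have hqi1 : ∀ i : Fin (e+1), 1 ≤ qint q (m i) := fun i => aux_qint_one_le hq0 hq1 (hpos i)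
  have hu0 : ∀ i : Fin (e+1), (0:ℝ) < q ^ (m i) := fun i => by positivity
  have hu1 : ∀ i : Fin (e+1), (q:ℝ) ^ (m i) < 1 :=
    fun i => pow_lt_one₀ hq0.le hq1 (by have := hpos i; omega)
  -- factor 0 bound
  have hf0 : q ^ (m 0 * (k 0 - 1)) / (qint q (m 0)) ^ (k 0)
      ≤ 16 * ((q ^ (m 0) : ℝ) ^ ((1:ℝ)/2)) / (m 0 : ℝ) ^ 2 := by
    have h1 : (q:ℝ) ^ (m 0 * (k 0 - 1)) ≤ q ^ (m 0) := by
      rw [pow_mul]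
      calc ((q:ℝ) ^ (m 0)) ^ (k 0 - 1) ≤ ((q:ℝ) ^ (m 0)) ^ 1 :=
            pow_le_pow_of_le_one (hu0 0).le (hu1 0).le (by omega)
        _ = q ^ (m 0) := pow_one _
    have h2 : (qint q (m 0)) ^ 2 ≤ (qint q (m 0)) ^ (k 0) :=
      pow_le_pow_right₀ (hqi1 0) hk1
    calc q ^ (m 0 * (k 0 - 1)) / (qint q (m 0)) ^ (k 0)
        ≤ (q ^ (m 0) : ℝ) / (qint q (m 0)) ^ 2 :=
          div_le_div₀ (hu0 0).le h1 (pow_pos (hqipos 0) 2) h2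
      _ ≤ _ := aux_L3 hq0 hq1 (hpos 0)
  -- middle factor bound (with handed power)
  have hfmid : ∀ i : Fin e, ((q ^ (m i.succ) : ℝ)) ^ c *
      (q ^ (m i.succ * (k i.succ - 1)) / (qint q (m i.succ)) ^ (k i.succ))
      ≤ 2*(e+1) / (m i.succ : ℝ) := by
    intro i
    have hnum : (q:ℝ) ^ (m i.succ * (k i.succ - 1)) ≤ 1 :=
      pow_le_one₀ hq0.le hq1.le
    have hden : qint q (m i.succ) ≤ (qint q (m i.succ)) ^ (k i.succ) := by
      calc qint q (m i.succ) = (qint q (m i.succ)) ^ 1 := (pow_one _).symm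
        _ ≤ _ := pow_le_pow_right₀ (hqi1 i.succ) (hk i.succ)
    have h3 : q ^ (m i.succ * (k i.succ - 1)) / (qint q (m i.succ)) ^ (k i.succ)
        ≤ 1 / qint q (m i.succ) :=
      div_le_div₀ zero_le_one hnum (hqipos i.succ) hden
    have hrp : (0:ℝ) ≤ ((q ^ (m i.succ) : ℝ)) ^ c := (Real.rpow_pos_of_pos (hu0 _) c).le
    calc ((q ^ (m i.succ) : ℝ)) ^ c * _ ≤ ((q ^ (m i.succ) : ℝ)) ^ c * (1 / qint q (m i.succ)) :=
          mul_le_mul_of_nonneg_left h3 hrp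
      _ = ((q ^ (m i.succ) : ℝ)) ^ c / qint q (m i.succ) := by ring
      _ ≤ 1 / (c * (m i.succ : ℝ)) := aux_L2 hq0 hq1 (hpos i.succ) hc0 hc1
      _ = 2*(e+1) / (m i.succ : ℝ) := by
          have hmpos : (0:ℝ) < (m i.succ : ℝ) := by exact_mod_cast hpos i.succ
          have h2e : (2*((e:ℝ)+1)) ≠ 0 := by positivity
          rw [hc]; field_simp
  -- handing: (q^{m 0})^{1/2} ≤ ∏ (q^{m i.succ})^c
  have hhand : ((q ^ (m 0) : ℝ)) ^ ((1:ℝ)/2) ≤ ∏ i : Fin e, ((q ^ (m i.succ) : ℝ)) ^ c := by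
    have step1 : ((q ^ (m 0) : ℝ)) ^ ((1:ℝ)/2) ≤ ((q ^ (m 0) : ℝ)) ^ (c * e) := by
      apply Real.rpow_le_rpow_of_exponent_ge (hu0 0) (hu1 0).le
      have he0 : (0:ℝ) ≤ (e:ℝ) := Nat.cast_nonneg e
      rw [hc, inv_mul_eq_div, div_le_div_iff₀ (by positivity) (by norm_num : (0:ℝ) < 2)]
      nlinarith
    calc ((q ^ (m 0) : ℝ)) ^ ((1:ℝ)/2) ≤ ((q ^ (m 0) : ℝ)) ^ (c * e) := step1
      _ = ∏ _i : Fin e, ((q ^ (m 0) : ℝ)) ^ c := by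
          rw [Finset.prod_const, Finset.card_univ, Fintype.card_fin,
            ← Real.rpow_natCast (((q ^ (m 0) : ℝ)) ^ c) e, ← Real.rpow_mul (hu0 0).le]
      _ ≤ ∏ i : Fin e, ((q ^ (m i.succ) : ℝ)) ^ c := by
          apply Finset.prod_le_prod
          · intro i _; positivity
          · intro i _
            apply Real.rpow_le_rpow (hu0 0).le ?_ hc0.le
            exact pow_le_pow_of_le_one hq0.le hq1.le (hle i.succ)
  -- assemble
  have hprodnn : ∀ i : Fin e, (0:ℝ) ≤ q ^ (m i.succ * (k i.succ - 1)) / (qint q (m i.succ)) ^ (k i.succ) :=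
    fun i => div_nonneg (by positivity) (pow_nonneg (hqipos i.succ).le _)
  rw [Fin.prod_univ_succ]
  have hm00 : (0:ℝ) < (m 0 : ℝ) := by exact_mod_cast hpos 0
  have step2 : (∏ i : Fin e, (q ^ (m i.succ * (k i.succ - 1)) / (qint q (m i.succ)) ^ (k i.succ)))
      * ((q ^ (m 0) : ℝ)) ^ ((1:ℝ)/2)
      ≤ ∏ i : Fin e, (2*(e+1) / (m i.succ : ℝ)) := by
    calc _ ≤ (∏ i : Fin e, (q ^ (m i.succ * (k i.succ - 1)) / (qint q (m i.succ)) ^ (k i.succ)))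
        * ∏ i : Fin e, ((q ^ (m i.succ) : ℝ)) ^ c := by
          apply mul_le_mul_of_nonneg_left hhand
          exact Finset.prod_nonneg fun i _ => hprodnn i
      _ = ∏ i : Fin e, (((q ^ (m i.succ) : ℝ)) ^ c *
            (q ^ (m i.succ * (k i.succ - 1)) / (qint q (m i.succ)) ^ (k i.succ))) := by
          rw [← Finset.prod_mul_distrib]; apply Finset.prod_congr rfl; intros; ring
      _ ≤ _ := Finset.prod_le_prod
          (fun i _ => mul_nonneg (Real.rpow_pos_of_pos (hu0 _) c).le (hprodnn i))
          (fun i _ => hfmid i)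
  calc (q ^ (m 0 * (k 0 - 1)) / (qint q (m 0)) ^ (k 0)) *
        ∏ i : Fin e, (q ^ (m i.succ * (k i.succ - 1)) / (qint q (m i.succ)) ^ (k i.succ))
      ≤ (16 * ((q ^ (m 0) : ℝ) ^ ((1:ℝ)/2)) / (m 0 : ℝ) ^ 2) *
        ∏ i : Fin e, (q ^ (m i.succ * (k i.succ - 1)) / (qint q (m i.succ)) ^ (k i.succ)) := by
        apply mul_le_mul_of_nonneg_right hf0
        exact Finset.prod_nonneg fun i _ => hprodnn i
    _ = (16 / (m 0 : ℝ) ^ 2) * ((∏ i : Fin e, (q ^ (m i.succ * (k i.succ - 1)) / (qint q (m i.succ)) ^ (k i.succ))) * ((q ^ (m 0) : ℝ)) ^ ((1:ℝ)/2)) := by ring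
    _ ≤ (16 / (m 0 : ℝ) ^ 2) * ∏ i : Fin e, (2*(e+1) / (m i.succ : ℝ)) := by
        apply mul_le_mul_of_nonneg_left step2 (by positivity)
    _ = (16 * (2*(e+1):ℝ)^e) * ((m 0 : ℝ) * ∏ i : Fin (e+1), (m i : ℝ))⁻¹ := by
        rw [Fin.prod_univ_succ (fun i => (m i : ℝ)), Finset.prod_div_distrib, Finset.prod_const]
        have : ∀ i : Fin e, ((m i.succ : ℝ)) ≠ 0 := fun i => by
          have := hpos i.succ; positivity
        rw [Finset.card_univ, Fintype.card_fin]
        field_simp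

/-- Symmetrization: ∏ aᵢ^(1+1/D) ≤ a₀ * ∏ aᵢ when a₀ is the max. -/
lemma aux_symm {D : ℕ} (hD : 0 < D) (a : Fin D → ℕ) (j0 : Fin D)
    (hle : ∀ i, a i ≤ a j0) (hpos : ∀ i, 1 ≤ a i) :
    ∏ i, ((a i : ℝ)) ^ ((1:ℝ) + 1/(D:ℝ)) ≤ (a j0 : ℝ) * ∏ i, (a i : ℝ) := by
  have hpos' : ∀ i, (0:ℝ) < (a i : ℝ) := fun i => by exact_mod_cast hpos i
  have h1 : ∀ i : Fin D, ((a i : ℝ)) ^ ((1:ℝ) + 1/(D:ℝ))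
      = (a i : ℝ) * ((a i : ℝ)) ^ ((1:ℝ)/(D:ℝ)) := by
    intro i
    rw [Real.rpow_add (hpos' i), Real.rpow_one]
  calc ∏ i, ((a i : ℝ)) ^ ((1:ℝ) + 1/(D:ℝ))
      = (∏ i, (a i : ℝ)) * ∏ i, ((a i : ℝ)) ^ ((1:ℝ)/(D:ℝ)) := by
        rw [← Finset.prod_mul_distrib]; exact Finset.prod_congr rfl fun i _ => h1 i
    _ ≤ (∏ i, (a i : ℝ)) * ∏ _i : Fin D, ((a j0 : ℝ)) ^ ((1:ℝ)/(D:ℝ)) := by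
        apply mul_le_mul_of_nonneg_left ?_ (Finset.prod_nonneg fun i _ => (hpos' i).le)
        apply Finset.prod_le_prod (fun i _ => by positivity)
        intro i _
        exact Real.rpow_le_rpow (hpos' i).le (by exact_mod_cast hle i) (by positivity)
    _ = (∏ i, (a i : ℝ)) * (a j0 : ℝ) := by
        rw [Finset.prod_const, Finset.card_univ, Fintype.card_fin]
        congr 1
        rw [← Real.rpow_natCast (((a j0 : ℝ)) ^ ((1:ℝ)/(D:ℝ))) D, ← Real.rpow_mul (hpos' j0).le,
          div_mul_cancel₀ _ (by exact_mod_cast hD.ne' : (D:ℝ) ≠ 0), Real.rpow_one]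
    _ = _ := mul_comm _ _

set_option maxHeartbeats 1000000 in
/-- Generic bound for tsums over subtypes of tuples dominated by a p-series product. -/
lemma aux_tsum_bound {D : ℕ} {P : (Fin D → ℕ) → Prop} (f : {m : Fin D → ℕ // P m} → ℝ)
    (hnn : ∀ x, 0 ≤ f x) {K s : ℝ} (hK : 0 ≤ K) (hs : 1 < s)
    (hb : ∀ x : {m : Fin D → ℕ // P m}, f x ≤ K * ∏ i, (((x.1 i : ℝ)) ^ s)⁻¹) :
    ∑' x, f x ≤ K * (∑' n : ℕ, (((n:ℝ)) ^ s)⁻¹) ^ D := by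
  classical
  have hgsum : Summable (fun n : ℕ => (((n:ℝ)) ^ s)⁻¹) := Real.summable_nat_rpow_inv.2 hs
  have hgnn : ∀ n : ℕ, 0 ≤ (((n:ℝ)) ^ s)⁻¹ := fun n => by positivity
  set Z := ∑' n : ℕ, (((n:ℝ)) ^ s)⁻¹ with hZ
  have hZ0 : 0 ≤ Z := tsum_nonneg hgnn
  apply tsum_le_of_sum_le' (by positivity)
  intro u
  have step1 : ∑ x ∈ u, f x ≤ K * ∑ x ∈ u, ∏ i, (((x.1 i : ℝ)) ^ s)⁻¹ := by
    rw [Finset.mul_sum]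
    exact Finset.sum_le_sum fun x _ => (hb x).trans le_rfl
  refine step1.trans (mul_le_mul_of_nonneg_left ?_ hK)
  -- bound the finite sum of products by Z^D
  set N : ℕ := u.sup fun x => Finset.univ.sup x.1 with hN
  have hmem : ∀ x ∈ u, x.1 ∈ Fintype.piFinset fun _ : Fin D => Finset.range (N+1) := by
    intro x hx
    rw [Fintype.mem_piFinset]
    intro i
    rw [Finset.mem_range, Nat.lt_succ_iff]
    exact le_trans (Finset.le_sup (Finset.mem_univ i))
      (Finset.le_sup (f := fun x : {m : Fin D → ℕ // P m} => Finset.univ.sup x.1) hx)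
  calc ∑ x ∈ u, ∏ i, (((x.1 i : ℝ)) ^ s)⁻¹
      = ∑ v ∈ u.image Subtype.val, ∏ i, (((v i : ℝ)) ^ s)⁻¹ := by
        rw [Finset.sum_image fun x _ y _ h => Subtype.ext h]
    _ ≤ ∑ v ∈ Fintype.piFinset fun _ : Fin D => Finset.range (N+1), ∏ i, (((v i : ℝ)) ^ s)⁻¹ := by
        apply Finset.sum_le_sum_of_subset_of_nonneg
        · intro v hv
          obtain ⟨x, hx, rfl⟩ := Finset.mem_image.1 hv
          exact hmem x hx
        · intro v _ _; exact Finset.prod_nonneg fun i _ => by positivity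
    _ = ∏ _i : Fin D, ∑ n ∈ Finset.range (N+1), (((n:ℝ)) ^ s)⁻¹ :=
        (Finset.prod_univ_sum (fun _ : Fin D => Finset.range (N+1))
          (fun _ n => (((n:ℝ)) ^ s)⁻¹)).symm
    _ ≤ ∏ _i : Fin D, Z := by
        apply Finset.prod_le_prod (fun i _ => Finset.sum_nonneg fun n _ => hgnn n)
        intro i _
        exact Summable.sum_le_tsum _ (fun n _ => hgnn n) hgsum
    _ = Z ^ D := by rw [Finset.prod_const, Finset.card_univ, Fintype.card_fin]


theorem stmt12 (d : ℕ) (hd : 0 < d) (k : Fin d → ℕ) (hk1 : 2 ≤ k ⟨0, hd⟩)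
    (hk : ∀ i, 1 ≤ k i) (r : ℕ) (hr : 0 < r) :
    (∃ C : ℝ, ∀ q ∈ Set.Ioo (0:ℝ) 1, |qZeta q k 0| ≤ C) ∧
    (∃ C : ℝ, ∀ q ∈ Set.Ioo (0:ℝ) 1, |qZetaR q k r| ≤ C) := by
  obtain ⟨e, rfl⟩ : ∃ e, d = e + 1 := ⟨d - 1, by omega⟩
  have h0 : (⟨0, hd⟩ : Fin (e+1)) = 0 := rfl
  rw [h0] at hk1
  constructor
  · -- Part 1 : qZeta
    have hs : (1:ℝ) < 1 + 1/((e+1 : ℕ):ℝ) := by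
      have : (0:ℝ) < 1/((e+1 : ℕ):ℝ) := by positivity
      linarith
    refine ⟨(16 * (2*(e+1):ℝ)^e) * (∑' n : ℕ, (((n:ℝ)) ^ ((1:ℝ) + 1/((e+1 : ℕ):ℝ)))⁻¹) ^ (e+1), ?_⟩
    rintro q ⟨hq0, hq1⟩
    have hK : (0:ℝ) ≤ 16 * (2*(e+1):ℝ)^e := by positivity
    have hterm_nn : ∀ x : {m : Fin (e+1) → ℕ // StrictAnti m ∧ ∀ i, 0 < m i},
        0 ≤ ∏ i, q ^ (x.1 i * (k i - 1)) / (qint q (x.1 i)) ^ (k i) := by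
      intro x
      apply Finset.prod_nonneg; intro i _
      exact div_nonneg (by positivity) (pow_nonneg (aux_qint_pos hq0 hq1 (x.2.2 i)).le _)
    rw [qZeta, abs_of_nonneg (tsum_nonneg hterm_nn)]
    apply aux_tsum_bound _ hterm_nn hK hs
    intro x
    have hle : ∀ i, x.1 i ≤ x.1 0 := fun i => x.2.1.antitone (Fin.zero_le i)
    have hpos : ∀ i, 1 ≤ x.1 i := fun i => x.2.2 i
    refine (aux_prod_bound e k hk1 hk hq0 hq1 x.1 hle hpos).trans ?_
    apply mul_le_mul_of_nonneg_left ?_ hK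
    have hsymm := aux_symm (Nat.succ_pos e) x.1 0 hle hpos
    have hp1 : (0:ℝ) < ∏ i, ((x.1 i : ℝ)) ^ ((1:ℝ) + 1/((e+1 : ℕ):ℝ)) :=
      Finset.prod_pos fun i _ =>
        Real.rpow_pos_of_pos (by exact_mod_cast hpos i) _
    rw [Finset.prod_inv_distrib]
    exact inv_anti₀ hp1 hsymm
  · -- Part 2 : qZetaR
    have hs : (1:ℝ) < 1 + 1/((e+1+1 : ℕ):ℝ) := by
      have : (0:ℝ) < 1/((e+1+1 : ℕ):ℝ) := by positivity
      linarith
    refine ⟨(16 * (2*(e+1):ℝ)^e) * (∑' n : ℕ, (((n:ℝ)) ^ ((1:ℝ) + 1/((e+1+1 : ℕ):ℝ)))⁻¹) ^ (e+1+1), ?_⟩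
    rintro q ⟨hq0, hq1⟩
    have hK : (0:ℝ) ≤ 16 * (2*(e+1):ℝ)^e := by positivity
    have hterm_nn : ∀ x : {m : Fin (e+1+1) → ℕ // StrictAnti m ∧ ∀ i, 0 < m i},
        0 ≤ (∏ i : Fin (e+1), q ^ (x.1 i.castSucc * (k i - 1)) / (qint q (x.1 i.castSucc)) ^ (k i))
          / ((x.1 (Fin.last (e+1)) : ℝ)) ^ r := by
      intro x
      apply div_nonneg ?_ (by positivity)
      apply Finset.prod_nonneg; intro i _
      exact div_nonneg (by positivity) (pow_nonneg (aux_qint_pos hq0 hq1 (x.2.2 _)).le _)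
    rw [qZetaR, abs_of_nonneg (tsum_nonneg hterm_nn)]
    apply aux_tsum_bound _ hterm_nn hK hs
    intro x
    have hanti := x.2.1
    have hposm : ∀ i, 1 ≤ x.1 i := x.2.2
    have hle' : ∀ i : Fin (e+1), x.1 i.castSucc ≤ x.1 (0 : Fin (e+1)).castSucc :=
      fun i => hanti.antitone (Fin.castSucc_le_castSucc_iff.mpr (Fin.zero_le i))
    have hpos' : ∀ i : Fin (e+1), 1 ≤ x.1 i.castSucc := fun i => hposm _
    have h1 := aux_prod_bound e k hk1 hk hq0 hq1 (fun i => x.1 i.castSucc) hle' hpos'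
    have hlast0 : (0:ℝ) < (x.1 (Fin.last (e+1)) : ℝ) := by exact_mod_cast hposm _
    have hlastr : ((x.1 (Fin.last (e+1)) : ℝ)) ≤ ((x.1 (Fin.last (e+1)) : ℝ)) ^ r :=
      le_self_pow₀ (by exact_mod_cast hposm _) hr.ne'
    have hle2 : ∀ i, x.1 i ≤ x.1 0 := fun i => hanti.antitone (Fin.zero_le i)
    have hsymm := aux_symm (Nat.succ_pos (e+1)) x.1 0 hle2 hposm
    have hp1 : (0:ℝ) < ∏ i, ((x.1 i : ℝ)) ^ ((1:ℝ) + 1/((e+1+1 : ℕ):ℝ)) :=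
      Finset.prod_pos fun i _ =>
        Real.rpow_pos_of_pos (by exact_mod_cast hposm i) _
    have hcast0 : ((0 : Fin (e+1)).castSucc) = (0 : Fin (e+1+1)) := Fin.castSucc_zero
    rw [hcast0] at h1
    calc (∏ i : Fin (e+1), q ^ (x.1 i.castSucc * (k i - 1)) / (qint q (x.1 i.castSucc)) ^ (k i))
          / ((x.1 (Fin.last (e+1)) : ℝ)) ^ r
        = (∏ i : Fin (e+1), q ^ (x.1 i.castSucc * (k i - 1)) / (qint q (x.1 i.castSucc)) ^ (k i))
          * (((x.1 (Fin.last (e+1)) : ℝ)) ^ r)⁻¹ := div_eq_mul_inv _ _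
      _ ≤ ((16 * (2*(e+1):ℝ)^e) * ((x.1 (0:Fin (e+1+1)) : ℝ) * ∏ i : Fin (e+1), (x.1 i.castSucc : ℝ))⁻¹)
          * (((x.1 (Fin.last (e+1)) : ℝ)) ^ r)⁻¹ :=
          mul_le_mul_of_nonneg_right h1 (by positivity)
      _ ≤ ((16 * (2*(e+1):ℝ)^e) * ((x.1 (0:Fin (e+1+1)) : ℝ) * ∏ i : Fin (e+1), (x.1 i.castSucc : ℝ))⁻¹)
          * ((x.1 (Fin.last (e+1)) : ℝ))⁻¹ := by
          apply mul_le_mul_of_nonneg_left (inv_anti₀ hlast0 hlastr)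
          have : (0:ℝ) < (x.1 (0:Fin (e+1+1)) : ℝ) := by exact_mod_cast hposm _
          have h2 : (0:ℝ) < ∏ i : Fin (e+1), (x.1 i.castSucc : ℝ) :=
            Finset.prod_pos fun i _ => by exact_mod_cast hpos' i
          positivity
      _ = (16 * (2*(e+1):ℝ)^e) * ((x.1 (0:Fin (e+1+1)) : ℝ) * ∏ i : Fin (e+1+1), (x.1 i : ℝ))⁻¹ := by
          rw [Fin.prod_univ_castSucc (fun i : Fin (e+1+1) => ((x.1 i : ℝ)))]
          rw [mul_inv, mul_inv, mul_inv]
          ring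
      _ ≤ (16 * (2*(e+1):ℝ)^e) * ∏ i, (((x.1 i : ℝ)) ^ ((1:ℝ) + 1/((e+1+1 : ℕ):ℝ)))⁻¹ := by
          apply mul_le_mul_of_nonneg_left ?_ hK
          rw [Finset.prod_inv_distrib]
          exact inv_anti₀ hp1 hsymm
end
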